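/- arXiv:1103.5599 — 2 statements merged into one kernel-verified Lean document; each statement's English description precedes it below -/
import Mathlib

section
/- Let G = (V,E) be a finite simple graph and B a bcc-clean simple K-join of G with ordering b_1, …, b_p where p ≥ 2(k + 1). Let M = {b_{k+2}, …, b_{p−k−1}} be B minus its k + 1 first and k + 1 last vertices. Then G admits a bcc-k-completion if and only if the induced subgraph G − M on V ∖ M admits a bcc-k-completion. -/
open SimpleGraph Finset

variable {V : Type*}

/-- `f` is an (injective, hence linear) umbrella ordering of the graph `G`. -/
def IsUmbrellaOrdering (G : SimpleGraph V) (f : V → ℕ) : Prop :=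
  Function.Injective f ∧
    ∀ u v w : V, f u < f v → f v < f w → G.Adj u w → G.Adj u v ∧ G.Adj v w

/-- A graph is a proper interval graph iff it admits an umbrella ordering. -/
def IsProperIntervalGraph (G : SimpleGraph V) : Prop :=
  ∃ f : V → ℕ, IsUmbrellaOrdering G f

/-- The graph `G + F` obtained by adding the set `F` of pairs as edges. -/
def addEdges (G : SimpleGraph V) (F : Finset (Sym2 V)) : SimpleGraph V :=
  G ⊔ SimpleGraph.fromEdgeSet ↑F

/-- `F` is a completion of `G`: a set of non-loop non-edges whose addition
makes `G` a proper interval graph. -/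
def IsCompletion (G : SimpleGraph V) (F : Finset (Sym2 V)) : Prop :=
  (∀ e ∈ F, ¬ e.IsDiag) ∧ (∀ e ∈ F, e ∉ G.edgeSet) ∧
    IsProperIntervalGraph (addEdges G F)

/-- `F` is a `k`-completion of `G`. -/
def IsKCompletion (G : SimpleGraph V) (k : ℕ) (F : Finset (Sym2 V)) : Prop :=
  IsCompletion G F ∧ F.card ≤ k

/-- `uv` is an extremal edge of `G` with respect to the ordering `f`. -/
def IsExtremalEdge (G : SimpleGraph V) (f : V → ℕ) (u v : V) : Prop :=
  G.Adj u v ∧ f u < f v ∧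
    ∀ u' v' : V, G.Adj u' v' → f u' ≤ f u → f v ≤ f v' → u' = u ∧ v' = v

/-- `c` is the center and `l₁, l₂, l₃` the leaves of an induced claw of `G`. -/
def IsClaw (G : SimpleGraph V) (c l₁ l₂ l₃ : V) : Prop :=
  G.Adj c l₁ ∧ G.Adj c l₂ ∧ G.Adj c l₃ ∧
    ¬ G.Adj l₁ l₂ ∧ ¬ G.Adj l₁ l₃ ∧ ¬ G.Adj l₂ l₃ ∧ l₁ ≠ l₂ ∧ l₁ ≠ l₃ ∧ l₂ ≠ l₃

/-- `a b c d` is an induced 4-cycle of `G` (in this cyclic order). -/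
def IsInducedC4 (G : SimpleGraph V) (a b c d : V) : Prop :=
  G.Adj a b ∧ G.Adj b c ∧ G.Adj c d ∧ G.Adj d a ∧
    ¬ G.Adj a c ∧ ¬ G.Adj b d ∧ a ≠ c ∧ b ≠ d

/-- `x` belongs to some claw of `G` (as center or leaf). -/
def InClaw (G : SimpleGraph V) (x : V) : Prop :=
  ∃ a b c d, IsClaw G a b c d ∧ (x = a ∨ x = b ∨ x = c ∨ x = d)

/-- `x` belongs to some induced 4-cycle of `G`. -/
def InC4 (G : SimpleGraph V) (x : V) : Prop :=
  ∃ a b c d, IsInducedC4 G a b c d ∧ (x = a ∨ x = b ∨ x = c ∨ x = d)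

/-- `{x, y, z}` is an independent set of size 3 (a `3K₁`) of `G`. -/
def IsInd3 (G : SimpleGraph V) (x y z : V) : Prop :=
  x ≠ y ∧ x ≠ z ∧ y ≠ z ∧ ¬ G.Adj x y ∧ ¬ G.Adj x z ∧ ¬ G.Adj y z

/-- `x` belongs to some independent set of size 3 of `G`. -/
def InInd3 (G : SimpleGraph V) (x : V) : Prop := ∃ y z, IsInd3 G x y z

/-- `G` is sunflower-reduced (for the parameter `k`). -/
def SunflowerReduced (G : SimpleGraph V) (k : ℕ) : Prop :=
  ∀ u v : V, u ≠ v → ¬ G.Adj u v →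
    {w : V | ∃ c, IsClaw G c u v w}.ncard ≤ k ∧
    {e : Sym2 V | ∃ a b, e = s(a, b) ∧ IsInducedC4 G u a v b}.ncard ≤ k

/-- `u` and `v` are true twins of `G`: they have the same closed neighborhood. -/
def TrueTwins (G : SimpleGraph V) (u v : V) : Prop :=
  insert u (G.neighborSet u) = insert v (G.neighborSet v)

/-- `b : Fin p → V` enumerates a `K`-join of `G` whose complement is
partitioned into `N`, `L`, `R`, `C`. -/
structure KJoinWith (G : SimpleGraph V) {p : ℕ} (b : Fin p → V)
    (N L R C : Set V) : Prop where
  inj : Function.Injective b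
  clique : ∀ i j : Fin p, i ≠ j → G.Adj (b i) (b j)
  cover : ∀ v : V, v ∉ Set.range b → v ∈ N ∪ L ∪ R ∪ C
  disj : List.Pairwise Disjoint [Set.range b, N, L, R, C]
  nAdj : ∀ v ∈ N, ∀ i, G.Adj v (b i)
  cNotAdj : ∀ v ∈ C, ∀ i, ¬ G.Adj v (b i)
  lrAdj : ∀ v ∈ L ∪ R, ∃ i, G.Adj v (b i)
  lrNotAll : ∀ v ∈ L ∪ R, ∃ i, ¬ G.Adj v (b i)
  rFirst : ∀ r ∈ R, ∀ i : Fin p, i.val = 0 → ¬ G.Adj r (b i)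
  lLast : ∀ x ∈ L, ∀ i : Fin p, i.val = p - 1 → ¬ G.Adj x (b i)
  rMono : ∀ i j : Fin p, i.val + 1 = j.val → ∀ r ∈ R, G.Adj (b i) r → G.Adj (b j) r
  lMono : ∀ i j : Fin p, i.val + 1 = j.val → ∀ x ∈ L, G.Adj (b j) x → G.Adj (b i) x

/-- `B ⊆ V` is a `K`-join of `G`. -/
def IsKJoin (G : SimpleGraph V) (B : Set V) : Prop :=
  ∃ (p : ℕ) (b : Fin p → V) (N L R C : Set V),
    Set.range b = B ∧ KJoinWith G b N L R C

/-- `B` is a clean `K`-join: none of its vertices belongs to a claw or an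
induced 4-cycle of `G`. -/
def IsCleanKJoin (G : SimpleGraph V) (B : Set V) : Prop :=
  IsKJoin G B ∧ ∀ x ∈ B, ¬ InClaw G x ∧ ¬ InC4 G x

/-- `B ⊆ V` is a simple `K`-join of `G` (one of `L`, `R` is empty). -/
def IsSimpleKJoin (G : SimpleGraph V) (B : Set V) : Prop :=
  ∃ (p : ℕ) (b : Fin p → V) (N L R C : Set V),
    Set.range b = B ∧ KJoinWith G b N L R C ∧ (L = ∅ ∨ R = ∅)

/-- `B` is bcc-clean: none of its vertices belongs to a `3K₁` or an induced
4-cycle of `G`. -/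
def IsBccClean (G : SimpleGraph V) (B : Set V) : Prop :=
  ∀ x ∈ B, ¬ InInd3 G x ∧ ¬ InC4 G x

/-- `b : Fin p → V` enumerates (in umbrella order) a 1-branch of `G` with
complement partitioned into `R`, `C`; `b l` is the neighbor of the last
vertex `b (p-1)` of minimal index.  The attachment clique is
`B₁ = {b i : l ≤ i}` and `B^R = {b i : i < l}`. -/
structure OneBranch (G : SimpleGraph V) {p : ℕ} (b : Fin p → V)
    (R C : Set V) (l : Fin p) : Prop where
  pos : 0 < p
  inj : Function.Injective b
  umbrella : ∀ i j m : Fin p, i < j → j < m → G.Adj (b i) (b m) →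
    G.Adj (b i) (b j) ∧ G.Adj (b j) (b m)
  connB : (G.induce (Set.range b)).Connected
  cover : ∀ v : V, v ∉ Set.range b → v ∈ R ∪ C
  disj : List.Pairwise Disjoint [Set.range b, R, C]
  noBC : ∀ v ∈ C, ∀ i, ¬ G.Adj v (b i)
  rNbr : ∀ v ∈ R, ∃ i, G.Adj v (b i)
  lMin : ∀ j : Fin p, j < l → ¬ G.Adj (b j) (b ⟨p - 1, Nat.sub_lt pos Nat.one_pos⟩)
  lNbr : l.val = p - 1 ∨ G.Adj (b l) (b ⟨p - 1, Nat.sub_lt pos Nat.one_pos⟩)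
  noEarlyR : ∀ j : Fin p, j < l → ∀ r ∈ R, ¬ G.Adj r (b j)
  rMono : ∀ i j : Fin p, l ≤ i → i.val + 1 = j.val → ∀ r ∈ R,
    G.Adj (b i) r → G.Adj (b j) r

/-- `b : Fin p → V` enumerates (in umbrella order) a 2-branch of `G` with
complement partitioned into `L`, `R`, `C`; `b l` is the neighbor of `b (p-1)`
of minimal index and `b l'` is the neighbor of `b 0` of maximal index.  The
attachment cliques are `B₁ = {b i : i ≤ l'}` and `B₂ = {b i : l ≤ i}`, and
`B^R = {b i : l' < i < l}`. -/
structure TwoBranch (G : SimpleGraph V) {p : ℕ} (b : Fin p → V)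
    (L R C : Set V) (l l' : Fin p) : Prop where
  pos : 0 < p
  inj : Function.Injective b
  umbrella : ∀ i j m : Fin p, i < j → j < m → G.Adj (b i) (b m) →
    G.Adj (b i) (b j) ∧ G.Adj (b j) (b m)
  connB : (G.induce (Set.range b)).Connected
  cover : ∀ v : V, v ∉ Set.range b → v ∈ L ∪ R ∪ C
  disj : List.Pairwise Disjoint [Set.range b, L, R, C]
  noBC : ∀ v ∈ C, ∀ i, ¬ G.Adj v (b i)
  lNbrEx : ∀ v ∈ L, ∃ i, G.Adj v (b i)
  rNbrEx : ∀ v ∈ R, ∃ i, G.Adj v (b i)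
  lMin : ∀ j : Fin p, j < l → ¬ G.Adj (b j) (b ⟨p - 1, Nat.sub_lt pos Nat.one_pos⟩)
  lNbr : l.val = p - 1 ∨ G.Adj (b l) (b ⟨p - 1, Nat.sub_lt pos Nat.one_pos⟩)
  lMax' : ∀ j : Fin p, l' < j → ¬ G.Adj (b ⟨0, pos⟩) (b j)
  lNbr' : l'.val = 0 ∨ G.Adj (b ⟨0, pos⟩) (b l')
  noEarlyR : ∀ j : Fin p, j < l → ∀ r ∈ R, ¬ G.Adj r (b j)
  noLateL : ∀ j : Fin p, l' < j → ∀ v ∈ L, ¬ G.Adj v (b j)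
  rMono : ∀ i j : Fin p, l ≤ i → i.val + 1 = j.val → ∀ r ∈ R,
    G.Adj (b i) r → G.Adj (b j) r
  lMono : ∀ i j : Fin p, j ≤ l' → i.val + 1 = j.val → ∀ v ∈ L,
    G.Adj (b j) v → G.Adj (b i) v

/-- `e : Fin q → Fin p` lists the last indices of the `q` K-joins of the
K-join decomposition of the 2-branch enumerated by `b` (with attachment
cliques ending at `l'` resp. starting at `l`). -/
def KJoinDecomp (G : SimpleGraph V) {p : ℕ} (b : Fin p → V) (l l' : Fin p)
    (q : ℕ) (e : Fin q → Fin p) : Prop :=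
  0 < q ∧
  (∀ i : Fin q, i.val = 0 → e i = l') ∧
  (∀ i : Fin q, i.val = q - 1 → (e i).val = p - 1) ∧
  StrictMono e ∧
  ∀ i j : Fin q, i.val + 1 = j.val →
    ∃ hs : (e i).val + 1 < p,
      (j.val + 1 < q →
        (⟨(e i).val + 1, hs⟩ : Fin p) < l ∧
        G.Adj (b ⟨(e i).val + 1, hs⟩) (b (e j)) ∧
        ∀ m : Fin p, G.Adj (b ⟨(e i).val + 1, hs⟩) (b m) → m ≤ e j) ∧
      (j.val + 1 = q → l ≤ (⟨(e i).val + 1, hs⟩ : Fin p))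

/-- `G` is a bi-clique chain graph: two cliques joined by a join. -/
def IsBicliqueChain (G : SimpleGraph V) : Prop :=
  ∃ (q : ℕ) (x : Fin q → V) (Y : Set V),
    Function.Injective x ∧
    Disjoint (Set.range x) Y ∧
    (∀ v : V, v ∈ Set.range x ∨ v ∈ Y) ∧
    (∀ i j : Fin q, i ≠ j → G.Adj (x i) (x j)) ∧
    G.IsClique Y ∧
    (∀ i j : Fin q, i ≤ j → ∀ y ∈ Y, G.Adj (x i) y → G.Adj (x j) y)

/-- `F` is a bcc-`k`-completion of `G`. -/
def IsBccKCompletion (G : SimpleGraph V) (k : ℕ) (F : Finset (Sym2 V)) : Prop :=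
  (∀ e ∈ F, ¬ e.IsDiag) ∧ (∀ e ∈ F, e ∉ G.edgeSet) ∧ F.card ≤ k ∧
    IsBicliqueChain (addEdges G F)

section InfraAux

variable {V : Type*}

lemma addEdges_adj (G : SimpleGraph V) (F : Finset (Sym2 V)) (u v : V) :
    (addEdges G F).Adj u v ↔ G.Adj u v ∨ (s(u, v) ∈ F ∧ u ≠ v) := by
  simp [addEdges, SimpleGraph.fromEdgeSet_adj]

/-- `a b c d e` is an induced 5-cycle. -/
def IsC5 (G : SimpleGraph V) (a b c d e : V) : Prop :=
  G.Adj a b ∧ G.Adj b c ∧ G.Adj c d ∧ G.Adj d e ∧ G.Adj e a ∧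
  ¬ G.Adj a c ∧ ¬ G.Adj a d ∧ ¬ G.Adj b d ∧ ¬ G.Adj b e ∧ ¬ G.Adj c e ∧
  a ≠ c ∧ a ≠ d ∧ b ≠ d ∧ b ≠ e ∧ c ≠ e

/-- obstruction-free: no induced 3K₁, C₄ or C₅. -/
def ObFree (G : SimpleGraph V) : Prop :=
  (∀ x y z, ¬ IsInd3 G x y z) ∧ (∀ a b c d, ¬ IsInducedC4 G a b c d) ∧
  (∀ a b c d e, ¬ IsC5 G a b c d e)

lemma IsInducedC4.rotate {G : SimpleGraph V} {a b c d : V}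
    (h : IsInducedC4 G a b c d) : IsInducedC4 G b c d a := by
  obtain ⟨h1, h2, h3, h4, h5, h6, h7, h8⟩ := h
  exact ⟨h2, h3, h4, h1, h6, fun hca => h5 hca.symm, h8, fun h => h7 h.symm⟩

lemma IsInducedC4.reflect {G : SimpleGraph V} {a b c d : V}
    (h : IsInducedC4 G a b c d) : IsInducedC4 G a d c b := by
  obtain ⟨h1, h2, h3, h4, h5, h6, h7, h8⟩ := h
  exact ⟨h4.symm, h3.symm, h2.symm, h1.symm, h5, fun h => h6 h.symm, h7, h8.symm⟩

lemma IsC5.rotate {G : SimpleGraph V} {a b c d e : V}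
    (h : IsC5 G a b c d e) : IsC5 G b c d e a := by
  obtain ⟨h1, h2, h3, h4, h5, n1, n2, n3, n4, n5, d1, d2, d3, d4, d5⟩ := h
  exact ⟨h2, h3, h4, h5, h1, n3, n4, n5, fun h => n1 h.symm,
    fun h => n2 h.symm, d3, d4, d5, d1.symm, d2.symm⟩

lemma IsC5.reflect {G : SimpleGraph V} {a b c d e : V}
    (h : IsC5 G a b c d e) : IsC5 G a e d c b := by
  obtain ⟨h1, h2, h3, h4, h5, n1, n2, n3, n4, n5, d1, d2, d3, d4, d5⟩ := h
  exact ⟨h5.symm, h4.symm, h3.symm, h2.symm, h1.symm, n2, n1,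
    fun h => n5 h.symm, fun h => n4 h.symm, fun h => n3 h.symm,
    d2, d1, d5.symm, d4.symm, d3.symm⟩

lemma IsInd3.perm12 {G : SimpleGraph V} {x y z : V} (h : IsInd3 G x y z) :
    IsInd3 G y x z := by
  obtain ⟨d1, d2, d3, n1, n2, n3⟩ := h
  exact ⟨d1.symm, d3, d2, fun h => n1 h.symm, n3, n2⟩

lemma IsInd3.perm23 {G : SimpleGraph V} {x y z : V} (h : IsInd3 G x y z) :
    IsInd3 G x z y := by
  obtain ⟨d1, d2, d3, n1, n2, n3⟩ := h
  exact ⟨d2, d1, d3.symm, n2, n1, fun h => n3 h.symm⟩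

/-- A bi-clique chain graph has no induced 3K₁, C₄, C₅. -/
lemma obFree_of_bicliqueChain {G : SimpleGraph V} (h : IsBicliqueChain G) :
    ObFree G := by
  obtain ⟨q, x, Y, hinj, hdisj, hcover, hxcl, hYcl, hmono⟩ := h
  -- nonadjacent distinct vertices lie on opposite sides
  have opp : ∀ u v : V, u ≠ v → ¬ G.Adj u v → (u ∈ Y ↔ v ∉ Y) := by
    intro u v huv hadj
    constructor
    · intro hu hv
      exact hadj (hYcl hu hv huv)
    · intro hv
      by_contra hu
      rcases hcover u with hu' | hu'; swap; · exact hu hu'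
      rcases hcover v with hv' | hv'; swap; · exact hv hv'
      obtain ⟨i, rfl⟩ := hu'
      obtain ⟨j, rfl⟩ := hv'
      exact hadj (hxcl i j (fun hij => huv (by rw [hij])))
  refine ⟨?_, ?_, ?_⟩
  · rintro a b c ⟨d1, d2, d3, n1, n2, n3⟩
    have h1 := opp a b d1 n1
    have h2 := opp a c d2 n2
    have h3 := opp b c d3 n3
    tauto
  · -- C4: first a helper for the canonical side pattern
    have core : ∀ a b c d : V, a ∉ Y → b ∉ Y → c ∈ Y → d ∈ Y →
        ¬ IsInducedC4 G a b c d := by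
      rintro a b c d ha hb hc hd ⟨h1, h2, h3, h4, h5, h6, _, _⟩
      rcases hcover a with ha' | ha'; swap; · exact ha ha'
      rcases hcover b with hb' | hb'; swap; · exact hb hb'
      obtain ⟨i, rfl⟩ := ha'
      obtain ⟨j, rfl⟩ := hb'
      rcases le_total i j with hij | hij
      · exact h6 (hmono i j hij d hd h4.symm)
      · exact h5 (hmono j i hij c hc h2)
    rintro a b c d hC4
    obtain ⟨h1, h2, h3, h4, h5, h6, h7, h8⟩ := id hC4
    have hac := opp a c h7 h5
    have hbd := opp b d h8 h6
    by_cases ha : a ∈ Y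
    · have hc : c ∉ Y := hac.mp ha
      by_cases hb : b ∈ Y
      · have hd : d ∉ Y := hbd.mp hb
        exact core c d a b hc hd ha hb (hC4.rotate.rotate)
      · have hd : d ∈ Y := by by_contra hd; exact hb (hbd.mpr hd)
        exact core b c d a hb hc hd ha hC4.rotate
    · have hc : c ∈ Y := by by_contra hc; exact ha (hac.mpr hc)
      by_cases hb : b ∈ Y
      · have hd : d ∉ Y := hbd.mp hb
        exact core d a b c hd ha hb hc (hC4.rotate.rotate.rotate)
      · have hd : d ∈ Y := by by_contra hd; exact hb (hbd.mpr hd)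
        exact core a b c d ha hb hc hd hC4
  · rintro a b c d e ⟨h1, h2, h3, h4, h5, n1, n2, n3, n4, n5, d1, d2, d3, d4, d5⟩
    have hac := opp a c d1 n1
    have hce := opp c e d5 n5
    have heb := opp b e d4 n4
    have hbd := opp b d d3 n3
    have hda := opp a d d2 n2
    tauto

end InfraAux


section ObFreeConstruction

variable {V : Type*}

private lemma key_le_aux {M x y e f : ℕ} (hf : f < M) (h : x * M + e ≤ y * M + f) :
    x ≤ y := by
  by_contra hxy
  push_neg at hxy
  have h1 : (y + 1) * M ≤ x * M := Nat.mul_le_mul_right M hxy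
  have h2 : y * M + M ≤ x * M := by rwa [add_mul, one_mul] at h1
  omega

/-- An obstruction-free finite graph is a bi-clique chain graph. -/
lemma bicliqueChain_of_obFree [Fintype V] {G : SimpleGraph V} (h : ObFree G) :
    IsBicliqueChain G := by
  classical
  by_cases hcomp : ∀ u v : V, u ≠ v → G.Adj u v
  · exact ⟨0, Fin.elim0, Set.univ, fun i => i.elim0, by simp,
      fun v => Or.inr trivial, fun i => i.elim0,
      fun u _ v _ huv => hcomp u v huv, fun i => i.elim0⟩
  push_neg at hcomp
  obtain ⟨u0, w0, hne0, hnadj0⟩ := hcomp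
  set nd : V → ℕ := fun v =>
    (Finset.univ.filter (fun z => z ≠ v ∧ ¬ G.Adj v z)).card with hnd
  obtain ⟨v₀, -, hmax⟩ :=
    Finset.exists_max_image Finset.univ nd ⟨u0, Finset.mem_univ u0⟩
  set A : Finset V := Finset.univ.filter (fun z => z ≠ v₀ ∧ ¬ G.Adj v₀ z) with hA
  set B : Finset V := Finset.univ \ A with hB
  have memA : ∀ z, z ∈ A ↔ z ≠ v₀ ∧ ¬ G.Adj v₀ z := by
    intro z; simp [hA]
  have memB : ∀ z, z ∈ B ↔ z ∉ A := by intro z; simp [hB]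
  have hndv₀ : nd v₀ = A.card := rfl
  have Aclique : ∀ a1 ∈ A, ∀ a2 ∈ A, a1 ≠ a2 → G.Adj a1 a2 := by
    intro a1 h1 a2 h2 hne
    by_contra hnadj
    obtain ⟨hne1, hn1⟩ := (memA a1).mp h1
    obtain ⟨hne2, hn2⟩ := (memA a2).mp h2
    exact h.1 v₀ a1 a2 ⟨Ne.symm hne1, Ne.symm hne2, hne, hn1, hn2, hnadj⟩
  have Bclique : ∀ b1 ∈ B, ∀ b2 ∈ B, b1 ≠ b2 → G.Adj b1 b2 := by
    intro b1 h1 b2 h2 hne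
    by_contra hnadj
    rw [memB] at h1 h2
    rcases eq_or_ne b1 v₀ with rfl | hb1v
    · exact h2 ((memA b2).mpr ⟨Ne.symm hne, hnadj⟩)
    rcases eq_or_ne b2 v₀ with rfl | hb2v
    · exact h1 ((memA b1).mpr ⟨hne, fun hh => hnadj hh.symm⟩)
    have hadj1 : G.Adj v₀ b1 := by
      by_contra hn; exact h1 ((memA b1).mpr ⟨hb1v, hn⟩)
    have hadj2 : G.Adj v₀ b2 := by
      by_contra hn; exact h2 ((memA b2).mpr ⟨hb2v, hn⟩)
    have excl : ∀ a ∈ A, (¬ G.Adj a b1 ∧ G.Adj a b2) ∨ (G.Adj a b1 ∧ ¬ G.Adj a b2) := by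
      intro a ha
      obtain ⟨hav, hna⟩ := (memA a).mp ha
      have hnotboth : ¬ (G.Adj a b1 ∧ G.Adj a b2) := by
        rintro ⟨x1, x2⟩
        exact h.2.1 v₀ b1 a b2 ⟨hadj1, x1.symm, x2, hadj2.symm, hna, hnadj,
          Ne.symm hav, hne⟩
      have hnotneither : ¬ (¬ G.Adj a b1 ∧ ¬ G.Adj a b2) := by
        rintro ⟨x1, x2⟩
        have hab1 : a ≠ b1 := fun hh => hna (hh ▸ hadj1)
        have hab2 : a ≠ b2 := fun hh => hna (hh ▸ hadj2)
        exact h.1 a b1 b2 ⟨hab1, hab2, hne, x1, x2, hnadj⟩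
      by_cases c1 : G.Adj a b1 <;> by_cases c2 : G.Adj a b2 <;> tauto
    by_cases hall : ∀ a ∈ A, G.Adj a b1
    · -- every a ∈ A is a non-neighbour of b2; so is b1
      have hsub : insert b1 A ⊆ Finset.univ.filter (fun z => z ≠ b2 ∧ ¬ G.Adj b2 z) := by
        intro z hz
        rcases Finset.mem_insert.mp hz with rfl | hz
        · exact Finset.mem_filter.mpr ⟨Finset.mem_univ _, hne, fun hh => hnadj hh.symm⟩
        · obtain ⟨hn2⟩ := (excl z hz).resolve_left (fun hh => hh.1 (hall z hz))
          obtain ⟨hzv, hzn⟩ := (memA z).mp hz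
          have : z ≠ b2 := fun hh => hzn (hh ▸ hadj2)
          exact Finset.mem_filter.mpr ⟨Finset.mem_univ _,
            this, fun hh => ((excl z hz).resolve_left
              (fun hh2 => hh2.1 (hall z hz))).2 hh.symm⟩
      have hb1A : b1 ∉ A := fun hh => ((memA b1).mp hh).2 hadj1
      have hcard : A.card + 1 ≤ nd b2 := by
        rw [hnd]
        calc A.card + 1 = (insert b1 A).card := (Finset.card_insert_of_notMem hb1A).symm
        _ ≤ _ := Finset.card_le_card hsub
      have := hmax b2 (Finset.mem_univ b2)
      omega
    · push_neg at hall
      obtain ⟨a0, ha0, ha0n⟩ := hall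
      -- if some a ∈ A is adjacent to b1 we get a C5, else b1 has too many non-nbrs
      by_cases hex : ∃ a ∈ A, G.Adj a b1
      · obtain ⟨a2, ha2, ha2adj⟩ := hex
        have ha0b2 : G.Adj a0 b2 := ((excl a0 ha0).resolve_right
          (fun hh => ha0n hh.1)).2
        have ha2b2 : ¬ G.Adj a2 b2 := ((excl a2 ha2).resolve_left
          (fun hh => hh.1 ha2adj)).2
        have ha02 : a0 ≠ a2 := fun hh => ha0n (hh ▸ ha2adj)
        have haa : G.Adj a2 a0 := Aclique a2 ha2 a0 ha0 (Ne.symm ha02)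
        obtain ⟨h0v, h0n⟩ := (memA a0).mp ha0
        obtain ⟨h2v, h2n⟩ := (memA a2).mp ha2
        refine h.2.2 v₀ b1 a2 a0 b2 ⟨hadj1, ha2adj.symm, haa, ha0b2, hadj2.symm,
          h2n, h0n, ?_, hnadj, ha2b2, Ne.symm h2v, Ne.symm h0v, ?_, hne, ?_⟩
        · exact fun hh => ha0n hh.symm
        · intro hh; rw [← hh] at h0n; exact h0n hadj1
        · intro hh; rw [hh] at ha2adj; exact hnadj ha2adj.symm
      · push_neg at hex
        have hsub : insert b2 A ⊆ Finset.univ.filter (fun z => z ≠ b1 ∧ ¬ G.Adj b1 z) := by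
          intro z hz
          rcases Finset.mem_insert.mp hz with rfl | hz
          · exact Finset.mem_filter.mpr ⟨Finset.mem_univ _, Ne.symm hne,
              fun hh => hnadj hh⟩
          · obtain ⟨hzv, hzn⟩ := (memA z).mp hz
            have : z ≠ b1 := fun hh => hzn (hh ▸ hadj1)
            exact Finset.mem_filter.mpr ⟨Finset.mem_univ _, this,
              fun hh => hex z hz hh.symm⟩
        have hb2A : b2 ∉ A := fun hh => ((memA b2).mp hh).2 hadj2
        have hcard : A.card + 1 ≤ nd b1 := by
          rw [hnd]
          calc A.card + 1 = (insert b2 A).card := (Finset.card_insert_of_notMem hb2A).symm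
          _ ≤ _ := Finset.card_le_card hsub
        have := hmax b1 (Finset.mem_univ b1)
        omega
  -- now build the chain structure
  set SB : V → Finset V := fun a => B.filter (fun y => ¬ G.Adj a y) with hSB
  have compTot : ∀ a1 ∈ A, ∀ a2 ∈ A, SB a1 ⊆ SB a2 ∨ SB a2 ⊆ SB a1 := by
    intro a1 h1 a2 h2
    by_contra hcon
    push_neg at hcon
    obtain ⟨y1, hy1, hy1'⟩ := Finset.not_subset.mp hcon.1
    obtain ⟨y2, hy2, hy2'⟩ := Finset.not_subset.mp hcon.2
    obtain ⟨hy1B, hy1n⟩ := Finset.mem_filter.mp hy1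
    obtain ⟨hy2B, hy2n⟩ := Finset.mem_filter.mp hy2
    have hy1a2 : G.Adj a2 y1 := by
      by_contra hc; exact hy1' (Finset.mem_filter.mpr ⟨hy1B, hc⟩)
    have hy2a1 : G.Adj a1 y2 := by
      by_contra hc; exact hy2' (Finset.mem_filter.mpr ⟨hy2B, hc⟩)
    have ha12 : a1 ≠ a2 := fun hh => hy1n (hh ▸ hy1a2)
    have hy12 : y1 ≠ y2 := fun hh => hy2n (hh ▸ hy1a2 :)
    have hAB : ∀ a ∈ A, ∀ y ∈ B, a ≠ y := by
      intro a ha y hy heq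
      exact ((memB y).mp hy) (heq ▸ ha)
    exact h.2.1 a1 a2 y1 y2 ⟨Aclique a1 h1 a2 h2 ha12, hy1a2, Bclique y1 hy1B y2 hy2B hy12,
      hy2a1.symm, hy1n, hy2n, hAB a1 h1 y1 hy1B, hAB a2 h2 y2 hy2B⟩
  have hAB' : ∀ a ∈ A, ∀ y ∈ B, a ≠ y := by
    intro a ha y hy heq
    exact ((memB y).mp hy) (heq ▸ ha)
  set M : ℕ := Fintype.card V + 1 with hM
  set key : V → ℕ := fun a =>
    (Fintype.card V - (SB a).card) * M + ((Fintype.equivFin V) a).val with hkey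
  have keyinj : Function.Injective key := by
    intro a b hab
    have ha : ((Fintype.equivFin V) a).val < M := by
      have := ((Fintype.equivFin V) a).isLt; omega
    have hb : ((Fintype.equivFin V) b).val < M := by
      have := ((Fintype.equivFin V) b).isLt; omega
    have hab' : (Fintype.card V - (SB a).card) * M + ((Fintype.equivFin V) a).val =
        (Fintype.card V - (SB b).card) * M + ((Fintype.equivFin V) b).val := hab
    have h1 : (Fintype.card V - (SB a).card) ≤ (Fintype.card V - (SB b).card) :=
      key_le_aux hb (le_of_eq hab')
    have h2 : (Fintype.card V - (SB b).card) ≤ (Fintype.card V - (SB a).card) :=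
      key_le_aux ha (le_of_eq hab'.symm)
    have h3 : (Fintype.card V - (SB a).card) = (Fintype.card V - (SB b).card) :=
      le_antisymm h1 h2
    rw [h3] at hab'
    exact (Fintype.equivFin V).injective (Fin.val_injective (Nat.add_left_cancel hab'))
  set r : V → V → Prop := fun a b => key a ≤ key b with hr
  haveI : DecidableRel r := fun a b => Nat.decLe _ _
  haveI hrtrans : IsTrans V r := ⟨fun _ _ _ => le_trans⟩
  haveI hranti : IsAntisymm V r := ⟨fun a b h1 h2 => keyinj (le_antisymm h1 h2)⟩
  haveI hrtot : IsTotal V r := ⟨fun a b => le_total _ _⟩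
  set l : List V := A.sort r with hl
  have lsorted : l.Pairwise r := Finset.pairwise_sort A r
  have lnodup : l.Nodup := Finset.sort_nodup A r
  have lmem : ∀ z, z ∈ l ↔ z ∈ A := fun z => Finset.mem_sort r
  have getinj : Function.Injective l.get := List.nodup_iff_injective_get.mp lnodup
  have hgm : ∀ i : Fin l.length, l.get i ∈ A :=
    fun i => (lmem _).mp (List.get_mem l i)
  refine ⟨l.length, l.get, fun z => z ∈ B, ?_, ?_, ?_, ?_, ?_, ?_⟩
  · exact getinj
  · refine Set.disjoint_left.mpr ?_
    rintro z ⟨i, rfl⟩ hz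
    exact ((memB _).mp hz) (hgm i)
  · intro v
    by_cases hv : v ∈ A
    · obtain ⟨i, hi⟩ := List.get_of_mem ((lmem v).mpr hv)
      exact Or.inl ⟨i, hi⟩
    · exact Or.inr ((memB v).mpr hv)
  · intro i j hij
    have hne : l.get i ≠ l.get j := fun hh => hij (getinj hh)
    exact Aclique _ (hgm i) _ (hgm j) hne
  · intro y1 hy1 y2 hy2 hne
    exact Bclique y1 hy1 y2 hy2 hne
  · intro i j hij y hy hadj
    by_contra hnadj
    have hySBj : y ∈ SB (l.get j) := Finset.mem_filter.mpr ⟨hy, hnadj⟩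
    have hrij : r (l.get i) (l.get j) := by
      rcases lt_or_eq_of_le hij with hlt | heq
      · exact List.Pairwise.rel_get_of_lt lsorted hlt
      · rw [heq]
    have hbound : ∀ a : V, (SB a).card ≤ Fintype.card V := by
      intro a
      exact le_trans (Finset.card_le_card (Finset.filter_subset _ _))
        (Finset.card_le_univ B)
    have hcardle : (SB (l.get j)).card ≤ (SB (l.get i)).card := by
      have hrij' : (Fintype.card V - (SB (l.get i)).card) * M +
            ((Fintype.equivFin V) (l.get i)).val ≤
          (Fintype.card V - (SB (l.get j)).card) * M +
            ((Fintype.equivFin V) (l.get j)).val := hrij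
      have h1 : (Fintype.card V - (SB (l.get i)).card) ≤
          (Fintype.card V - (SB (l.get j)).card) := by
        refine key_le_aux ?_ hrij'
        have := ((Fintype.equivFin V) (l.get j)).isLt; omega
      have := hbound (l.get i); have := hbound (l.get j); omega
    have hsub : SB (l.get j) ⊆ SB (l.get i) := by
      rcases compTot _ (hgm i) _ (hgm j) with hc | hc
      · rw [Finset.eq_of_subset_of_card_le hc hcardle]
      · exact hc
    exact (Finset.mem_filter.mp (hsub hySBj)).2 hadj

end ObFreeConstruction


section UnivEquiv

variable {V : Type*}

/-- `G` with every vertex of `M` joined to everything. -/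
def addUniv (G : SimpleGraph V) (M : Set V) : SimpleGraph V where
  Adj u v := u ≠ v ∧ (G.Adj u v ∨ u ∈ M ∨ v ∈ M)
  symm := by
    constructor
    rintro u v ⟨h1, h2⟩
    refine ⟨h1.symm, ?_⟩
    rcases h2 with h | h | h
    exacts [Or.inl h.symm, Or.inr (Or.inr h), Or.inr (Or.inl h)]
  loopless := ⟨fun v h => h.1 rfl⟩

lemma addUniv_adj {G : SimpleGraph V} {M : Set V} {u v : V} :
    (addUniv G M).Adj u v ↔ u ≠ v ∧ (G.Adj u v ∨ u ∈ M ∨ v ∈ M) := Iff.rfl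

lemma addUniv_adj_of_not_mem {G : SimpleGraph V} {M : Set V} {u v : V}
    (hu : u ∉ M) (hv : v ∉ M) : (addUniv G M).Adj u v ↔ G.Adj u v := by
  rw [addUniv_adj]
  constructor
  · rintro ⟨h1, h | h | h⟩
    exacts [h, absurd h hu, absurd h hv]
  · intro h; exact ⟨h.ne, Or.inl h⟩

lemma addUniv_adj_of_mem {G : SimpleGraph V} {M : Set V} {u v : V}
    (hu : u ∈ M) (hne : u ≠ v) : (addUniv G M).Adj u v :=
  ⟨hne, Or.inr (Or.inl hu)⟩

lemma le_addUniv {G : SimpleGraph V} {M : Set V} : G ≤ addUniv G M :=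
  fun _ _ h => ⟨h.ne, Or.inl h⟩

lemma adj_addEdges_of_adj {G : SimpleGraph V} {F : Finset (Sym2 V)} {u v : V}
    (h : G.Adj u v) : (addEdges G F).Adj u v := by
  rw [addEdges_adj]; exact Or.inl h

/-- restriction of a bi-clique chain graph to an induced subgraph -/
lemma IsBicliqueChain.induce {G : SimpleGraph V} (h : IsBicliqueChain G)
    (s : Set V) : IsBicliqueChain (G.induce s) := by
  classical
  obtain ⟨q, x, Y, hinj, hdisj, hcover, hxcl, hYcl, hmono⟩ := h
  set T : Finset (Fin q) := Finset.univ.filter (fun i => x i ∈ s) with hT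
  set ι := T.orderIsoOfFin rfl with hι
  have hmemT : ∀ i : Fin T.card, x ((ι i) : Fin q) ∈ s := by
    intro i
    have := (ι i).2
    exact (Finset.mem_filter.mp this).2
  refine ⟨T.card, fun i => ⟨x (ι i), hmemT i⟩, {a : ↥s | (a : V) ∈ Y},
      ?_, ?_, ?_, ?_, ?_, ?_⟩
  · intro a b hab
    have h1 : x ((ι a) : Fin q) = x ((ι b) : Fin q) := congrArg Subtype.val hab
    have h2 : ((ι a) : Fin q) = ((ι b) : Fin q) := hinj h1
    exact ι.injective (Subtype.ext h2)
  · rw [Set.disjoint_left]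
    rintro a ⟨i, rfl⟩ ha
    exact Set.disjoint_left.mp hdisj ⟨(ι i : Fin q), rfl⟩ ha
  · rintro ⟨v, hv⟩
    rcases hcover v with ⟨i, hi⟩ | hY
    · left
      have hiT : i ∈ T := by rw [hT]; exact Finset.mem_filter.mpr ⟨Finset.mem_univ _, hi ▸ hv⟩
      refine ⟨ι.symm ⟨i, hiT⟩, ?_⟩
      apply Subtype.ext
      show x ((ι (ι.symm ⟨i, hiT⟩)) : Fin q) = v
      rw [ι.apply_symm_apply]
      exact hi
    · exact Or.inr hY
  · intro i j hij
    have hne : ((ι i) : Fin q) ≠ ((ι j) : Fin q) := by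
      intro hh
      exact hij (ι.injective (Subtype.ext hh))
    exact hxcl _ _ hne
  · rintro ⟨u, hu⟩ hu' ⟨w, hw⟩ hw' hne
    exact hYcl hu' hw' (fun hh => hne (Subtype.ext hh))
  · intro i j hij y hy hadj
    have hle : ((ι i) : Fin q) ≤ ((ι j) : Fin q) := by
      have := ι.monotone hij
      exact this
    exact hmono _ _ hle y hy hadj

lemma forward_to_addUniv [Fintype V] {G : SimpleGraph V} {M : Set V} {k : ℕ}
    (h : ∃ F, IsBccKCompletion G k F) :
    ∃ F, IsBccKCompletion (addUniv G M) k F := by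
  classical
  obtain ⟨F, hdiag, hedge, hcard, hchain⟩ := h
  set F' : Finset (Sym2 V) := F.filter (fun e => ∀ z ∈ e, z ∉ M) with hF'
  have hsub : F' ⊆ F := Finset.filter_subset _ _
  have hOb := obFree_of_bicliqueChain hchain
  have hadjiff : ∀ u v : V, u ∉ M → v ∉ M →
      ((addEdges (addUniv G M) F').Adj u v ↔ (addEdges G F).Adj u v) := by
    intro u v hu hv
    rw [addEdges_adj, addEdges_adj, addUniv_adj_of_not_mem hu hv]
    constructor
    · rintro (h | ⟨hm, hne⟩)
      exacts [Or.inl h, Or.inr ⟨hsub hm, hne⟩]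
    · rintro (h | ⟨hm, hne⟩)
      · exact Or.inl h
      · refine Or.inr ⟨?_, hne⟩
        rw [hF', Finset.mem_filter]
        refine ⟨hm, ?_⟩
        intro z hz
        rw [Sym2.mem_iff] at hz
        rcases hz with rfl | rfl
        exacts [hu, hv]
  have huniv : ∀ z ∈ M, ∀ u : V, z ≠ u → (addEdges (addUniv G M) F').Adj z u := by
    intro z hz u hne
    exact adj_addEdges_of_adj (addUniv_adj_of_mem hz hne)
  refine ⟨F', ?_, ?_, le_trans (Finset.card_le_card hsub) hcard, ?_⟩
  · exact fun e he => hdiag e (hsub he)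
  · intro e he hmem
    induction e with
    | _ a b =>
      rw [SimpleGraph.mem_edgeSet _] at hmem
      obtain ⟨hne, hcase⟩ := hmem
      rcases hcase with hadj | ha | hb
      · exact hedge _ (hsub he) ((SimpleGraph.mem_edgeSet _).mpr hadj)
      · have := (Finset.mem_filter.mp he).2 a (by simp)
        exact this ha
      · have := (Finset.mem_filter.mp he).2 b (by simp)
        exact this hb
  · apply bicliqueChain_of_obFree
    set K := addEdges (addUniv G M) F' with hK
    have hnM : ∀ {u v : V}, ¬ K.Adj u v → u ≠ v → u ∉ M := by
      intro u v hn hne hu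
      exact hn (huniv u hu v hne)
    refine ⟨?_, ?_, ?_⟩
    · rintro a b c ⟨d1, d2, d3, n1, n2, n3⟩
      have ha : a ∉ M := hnM n1 d1
      have hb : b ∉ M := hnM (fun hh => n1 hh.symm) d1.symm
      have hc : c ∉ M := hnM (fun hh => n2 hh.symm) d2.symm
      exact hOb.1 a b c ⟨d1, d2, d3, fun hh => n1 ((hadjiff a b ha hb).mpr hh),
        fun hh => n2 ((hadjiff a c ha hc).mpr hh),
        fun hh => n3 ((hadjiff b c hb hc).mpr hh)⟩
    · rintro a b c d ⟨h1, h2, h3, h4, n1, n2, d1, d2⟩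
      have ha : a ∉ M := hnM n1 d1
      have hc : c ∉ M := hnM (fun hh => n1 hh.symm) d1.symm
      have hb : b ∉ M := hnM n2 d2
      have hd : d ∉ M := hnM (fun hh => n2 hh.symm) d2.symm
      exact hOb.2.1 a b c d ⟨(hadjiff a b ha hb).mp h1, (hadjiff b c hb hc).mp h2,
        (hadjiff c d hc hd).mp h3, (hadjiff d a hd ha).mp h4,
        fun hh => n1 ((hadjiff a c ha hc).mpr hh),
        fun hh => n2 ((hadjiff b d hb hd).mpr hh), d1, d2⟩
    · rintro a b c d e ⟨h1, h2, h3, h4, h5, n1, n2, n3, n4, n5, d1, d2, d3, d4, d5⟩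
      have ha : a ∉ M := hnM n1 d1
      have hc : c ∉ M := hnM (fun hh => n1 hh.symm) d1.symm
      have hb : b ∉ M := hnM n3 d3
      have hd : d ∉ M := hnM (fun hh => n3 hh.symm) d3.symm
      have he : e ∉ M := hnM (fun hh => n4 hh.symm) d4.symm
      exact hOb.2.2 a b c d e ⟨(hadjiff a b ha hb).mp h1, (hadjiff b c hb hc).mp h2,
        (hadjiff c d hc hd).mp h3, (hadjiff d e hd he).mp h4,
        (hadjiff e a he ha).mp h5,
        fun hh => n1 ((hadjiff a c ha hc).mpr hh),
        fun hh => n2 ((hadjiff a d ha hd).mpr hh),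
        fun hh => n3 ((hadjiff b d hb hd).mpr hh),
        fun hh => n4 ((hadjiff b e hb he).mpr hh),
        fun hh => n5 ((hadjiff c e hc he).mpr hh), d1, d2, d3, d4, d5⟩

end UnivEquiv


section SubtypeEquiv

variable {V : Type*}

lemma completion_addUniv_of_induce [Fintype V] {G : SimpleGraph V} {M : Set V}
    {k : ℕ} (h : ∃ F, IsBccKCompletion (G.induce {v | v ∉ M}) k F) :
    ∃ F, IsBccKCompletion (addUniv G M) k F := by
  classical
  obtain ⟨F0, hdiag, hedge, hcard, hchain⟩ := h
  set emb : Sym2 ↥{v | v ∉ M} ↪ Sym2 V :=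
    ⟨Sym2.map Subtype.val, Sym2.map.injective Subtype.val_injective⟩ with hemb
  have hmemF : ∀ (a b : ↥{v | v ∉ M}), (s(↑a, ↑b) ∈ F0.map emb ↔ s(a, b) ∈ F0) := by
    intro a b
    rw [Finset.mem_map]
    constructor
    · rintro ⟨e0, he0, hh⟩
      have : emb s(a, b) = emb e0 := by
        rw [hh]; rfl
      have h2 := emb.injective this
      rwa [h2]
    · intro hm
      exact ⟨s(a, b), hm, rfl⟩
  have hadjiff : ∀ (a b : ↥{v | v ∉ M}),
      ((addEdges (addUniv G M) (F0.map emb)).Adj ↑a ↑b ↔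
        (addEdges (G.induce {v | v ∉ M}) F0).Adj a b) := by
    intro a b
    rw [addEdges_adj, addEdges_adj, addUniv_adj_of_not_mem a.2 b.2, hmemF]
    have : ((a : V) ≠ (b : V)) ↔ a ≠ b := Subtype.coe_injective.ne_iff
    rw [this]
    rfl
  refine ⟨F0.map emb, ?_, ?_, ?_, ?_⟩
  · intro e he
    obtain ⟨e0, he0, rfl⟩ := Finset.mem_map.mp he
    induction e0 with
    | _ a b =>
      intro hd
      have : (a : V) = (b : V) := hd
      exact hdiag _ he0 (Subtype.coe_injective this)
  · intro e he hmem
    obtain ⟨e0, he0, rfl⟩ := Finset.mem_map.mp he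
    induction e0 with
    | _ a b =>
      have hadj : (addUniv G M).Adj ↑a ↑b := hmem
      rw [addUniv_adj_of_not_mem a.2 b.2] at hadj
      exact hedge _ he0 ((SimpleGraph.mem_edgeSet _).mpr hadj)
  · rw [Finset.card_map]; exact hcard
  · obtain ⟨q, x, Y, hinj, hdisj, hcover, hxcl, hYcl, hmono⟩ := hchain
    refine ⟨q, fun i => ↑(x i), (Subtype.val '' Y) ∪ M, ?_, ?_, ?_, ?_, ?_, ?_⟩
    · intro i j hij
      exact hinj (Subtype.coe_injective hij)
    · rw [Set.disjoint_left]
      rintro z ⟨i, rfl⟩ hz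
      rcases hz with ⟨y, hy, hyy⟩ | hz
      · exact Set.disjoint_left.mp hdisj ⟨i, rfl⟩ (by rwa [← Subtype.coe_injective hyy])
      · exact (x i).2 hz
    · intro v
      by_cases hv : v ∈ M
      · exact Or.inr (Or.inr hv)
      · rcases hcover ⟨v, hv⟩ with ⟨i, hi⟩ | hY
        · exact Or.inl ⟨i, congrArg Subtype.val hi⟩
        · exact Or.inr (Or.inl ⟨⟨v, hv⟩, hY, rfl⟩)
    · intro i j hij
      exact (hadjiff _ _).mpr (hxcl i j hij)
    · rintro z hz w hw hne
      rcases hz with ⟨zy, hzy, rfl⟩ | hz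
      · rcases hw with ⟨wy, hwy, rfl⟩ | hw
        · exact (hadjiff _ _).mpr
            (hYcl hzy hwy (fun hh => hne (congrArg Subtype.val hh)))
        · exact ((addEdges (addUniv G M) (F0.map emb)).adj_symm
            (adj_addEdges_of_adj (addUniv_adj_of_mem hw (Ne.symm hne))))
      · exact adj_addEdges_of_adj (addUniv_adj_of_mem hz hne)
    · intro i j hij y hy hadj
      rcases hy with ⟨yy, hyy, rfl⟩ | hy
      · exact (hadjiff _ _).mpr (hmono i j hij yy hyy ((hadjiff _ _).mp hadj))
      · refine adj_addEdges_of_adj (addUniv_adj_of_mem ?_ ?_).symm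
        · exact hy
        · intro hh
          rw [hh] at hy
          exact (x j).2 hy

lemma completion_induce_of_addUniv [Fintype V] {G : SimpleGraph V} {M : Set V}
    {k : ℕ} (h : ∃ F, IsBccKCompletion (addUniv G M) k F) :
    ∃ F, IsBccKCompletion (G.induce {v | v ∉ M}) k F := by
  classical
  obtain ⟨F, hdiag, hedge, hcard, hchain⟩ := h
  have havoid : ∀ e ∈ F, ∀ z ∈ M, z ∉ e := by
    intro e he z hz hze
    induction e with
    | _ a b =>
      have hne : a ≠ b := by
        intro hh
        exact hdiag _ he (by rw [hh]; exact Sym2.mk_isDiag_iff.mpr rfl)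
      rw [Sym2.mem_iff] at hze
      rcases hze with rfl | rfl
      · exact hedge _ he ((SimpleGraph.mem_edgeSet _).mpr (addUniv_adj_of_mem hz hne))
      · exact hedge _ he ((SimpleGraph.mem_edgeSet _).mpr
          ((addUniv_adj_of_mem hz (Ne.symm hne)).symm))
  set F0 : Finset (Sym2 ↥{v | v ∉ M}) :=
    Finset.univ.filter (fun e' => Sym2.map Subtype.val e' ∈ F) with hF0
  have hmemF0 : ∀ e' : Sym2 ↥{v | v ∉ M},
      e' ∈ F0 ↔ Sym2.map Subtype.val e' ∈ F := by
    intro e'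
    rw [hF0, Finset.mem_filter]
    simp
  have hGeq : addEdges (G.induce {v | v ∉ M}) F0 =
      (addEdges (addUniv G M) F).induce {v | v ∉ M} := by
    ext a b
    show (addEdges (G.induce {v | v ∉ M}) F0).Adj a b ↔
      (addEdges (addUniv G M) F).Adj ↑a ↑b
    rw [addEdges_adj, addEdges_adj, addUniv_adj_of_not_mem a.2 b.2]
    have h1 : (s(a, b) ∈ F0) ↔ s((a : V), (b : V)) ∈ F := hmemF0 s(a, b)
    have h2 : ((a : V) ≠ (b : V)) ↔ a ≠ b := Subtype.coe_injective.ne_iff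
    rw [h1, h2]
    rfl
  refine ⟨F0, ?_, ?_, ?_, ?_⟩
  · intro e he hd
    induction e with
    | _ a b =>
      have hab : a = b := Sym2.mk_isDiag_iff.mp hd
      have : Sym2.map Subtype.val s(a, b) ∈ F := (hmemF0 _).mp he
      apply hdiag _ this
      show Sym2.IsDiag s((a : V), (b : V))
      exact Sym2.mk_isDiag_iff.mpr (congrArg Subtype.val hab)
  · intro e he hmem
    induction e with
    | _ a b =>
      have hadj : G.Adj ↑a ↑b := hmem
      have : Sym2.map Subtype.val s(a, b) ∈ F := (hmemF0 _).mp he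
      apply hedge _ this
      show s((a : V), (b : V)) ∈ _
      rw [SimpleGraph.mem_edgeSet _, addUniv_adj_of_not_mem a.2 b.2]
      exact hadj
  · have : F0.card ≤ F.card := by
      apply Finset.card_le_card_of_injOn (Sym2.map Subtype.val)
      · intro e' he'
        exact (hmemF0 _).mp he'
      · intro e1 _ e2 _ hh
        exact Sym2.map.injective Subtype.val_injective hh
    exact le_trans this hcard
  · rw [hGeq]
    exact hchain.induce _

end SubtypeEquiv


section MinMaxDef

variable {V : Type*}

/-- meet/join swap of the neighbourhoods of the two vertices `v, w`. -/
def mmSwap (H : SimpleGraph V) (v w : V) : SimpleGraph V where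
  Adj a b := a ≠ b ∧
    ((a ≠ v ∧ a ≠ w ∧ b ≠ v ∧ b ≠ w ∧ H.Adj a b) ∨
     (a = v ∧ b = w) ∨ (a = w ∧ b = v) ∨
     (a = v ∧ b ≠ v ∧ b ≠ w ∧ H.Adj b v ∧ H.Adj b w) ∨
     (b = v ∧ a ≠ v ∧ a ≠ w ∧ H.Adj a v ∧ H.Adj a w) ∨
     (a = w ∧ b ≠ v ∧ b ≠ w ∧ (H.Adj b v ∨ H.Adj b w)) ∨
     (b = w ∧ a ≠ v ∧ a ≠ w ∧ (H.Adj a v ∨ H.Adj a w)))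
  symm := by
    constructor
    rintro a b ⟨hne, hor⟩
    refine ⟨hne.symm, ?_⟩
    rcases hor with ⟨h1, h2, h3, h4, h5⟩ | ⟨h1, h2⟩ | ⟨h1, h2⟩ | ⟨h1, h2, h3, h4, h5⟩ |
      ⟨h1, h2, h3, h4, h5⟩ | ⟨h1, h2, h3, h4⟩ | ⟨h1, h2, h3, h4⟩
    · exact Or.inl ⟨h3, h4, h1, h2, h5.symm⟩
    · exact Or.inr (Or.inr (Or.inl ⟨h2, h1⟩))
    · exact Or.inr (Or.inl ⟨h2, h1⟩)
    · exact Or.inr (Or.inr (Or.inr (Or.inr (Or.inl ⟨h1, h2, h3, h4, h5⟩))))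
    · exact Or.inr (Or.inr (Or.inr (Or.inl ⟨h1, h2, h3, h4, h5⟩)))
    · exact Or.inr (Or.inr (Or.inr (Or.inr (Or.inr (Or.inr ⟨h1, h2, h3, h4⟩)))))
    · exact Or.inr (Or.inr (Or.inr (Or.inr (Or.inr (Or.inl ⟨h1, h2, h3, h4⟩)))))
  loopless := ⟨fun a h => h.1 rfl⟩

lemma mmSwap_adj_out {H : SimpleGraph V} {v w a b : V}
    (hav : a ≠ v) (haw : a ≠ w) (hbv : b ≠ v) (hbw : b ≠ w) :
    (mmSwap H v w).Adj a b ↔ H.Adj a b := by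
  show (a ≠ b ∧ _) ↔ _
  constructor
  · rintro ⟨hne, hor⟩
    rcases hor with ⟨_, _, _, _, h⟩ | ⟨h1, _⟩ | ⟨h1, _⟩ | ⟨h1, _⟩ | ⟨h1, _⟩ |
      ⟨h1, _⟩ | ⟨h1, _⟩
    exacts [h, absurd h1 hav, absurd h1 haw, absurd h1 hav, absurd h1 hbv,
      absurd h1 haw, absurd h1 hbw]
  · intro h
    exact ⟨h.ne, Or.inl ⟨hav, haw, hbv, hbw, h⟩⟩

lemma mmSwap_adj_v {H : SimpleGraph V} {v w a : V} (hvw : v ≠ w)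
    (hav : a ≠ v) (haw : a ≠ w) :
    (mmSwap H v w).Adj a v ↔ (H.Adj a v ∧ H.Adj a w) := by
  show (a ≠ v ∧ _) ↔ _
  constructor
  · rintro ⟨hne, hor⟩
    rcases hor with ⟨_, _, h1, _⟩ | ⟨h1, _⟩ | ⟨h1, _⟩ | ⟨h1, _⟩ |
      ⟨h1, h2, h3, h4, h5⟩ | ⟨h1, _⟩ | ⟨h1, _⟩
    exacts [absurd rfl h1, absurd h1 hav, absurd h1 haw, absurd h1 hav,
      ⟨h4, h5⟩, absurd h1 haw, absurd h1.symm hvw.symm]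
  · rintro ⟨h1, h2⟩
    exact ⟨hav, Or.inr (Or.inr (Or.inr (Or.inr (Or.inl ⟨rfl, hav, haw, h1, h2⟩))))⟩

lemma mmSwap_adj_w {H : SimpleGraph V} {v w a : V} (hvw : v ≠ w)
    (hav : a ≠ v) (haw : a ≠ w) :
    (mmSwap H v w).Adj a w ↔ (H.Adj a v ∨ H.Adj a w) := by
  show (a ≠ w ∧ _) ↔ _
  constructor
  · rintro ⟨hne, hor⟩
    rcases hor with ⟨_, _, _, h1, _⟩ | ⟨h1, _⟩ | ⟨_, h1⟩ | ⟨h1, _⟩ |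
      ⟨h1, _⟩ | ⟨h1, _⟩ | ⟨h1, h2, h3, h4⟩
    exacts [absurd rfl h1, absurd h1 hav, absurd h1 hvw.symm, absurd h1 hav,
      absurd h1 hvw.symm, absurd h1 haw, h4]
  · intro h1
    exact ⟨haw, Or.inr (Or.inr (Or.inr (Or.inr (Or.inr (Or.inr ⟨rfl, hav, haw, h1⟩)))))⟩

lemma mmSwap_adj_vw {H : SimpleGraph V} {v w : V} (hvw : v ≠ w) :
    (mmSwap H v w).Adj v w :=
  ⟨hvw, Or.inr (Or.inl ⟨rfl, rfl⟩)⟩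

end MinMaxDef


section MinMaxMain

variable {V : Type*}

lemma IsInd3.perm13 {G : SimpleGraph V} {x y z : V} (h : IsInd3 G x y z) :
    IsInd3 G z y x := h.perm23.perm12.perm23

lemma mmSwap_obFree {H : SimpleGraph V} {v w : V} (hOb : ObFree H) (hvw : H.Adj v w)
    (halpha : ∀ z1 z2 : V, z1 ≠ v → z1 ≠ w → z2 ≠ v → z2 ≠ w → z1 ≠ z2 →
      H.Adj z1 v → ¬ H.Adj z1 w → H.Adj z2 w → ¬ H.Adj z2 v → H.Adj z1 z2) :
    ObFree (mmSwap H v w) := by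
  have hne : v ≠ w := hvw.ne
  set H2 := mmSwap H v w with hH2
  have aout : ∀ {a b : V}, a ≠ v → a ≠ w → b ≠ v → b ≠ w →
      (H2.Adj a b ↔ H.Adj a b) := fun h1 h2 h3 h4 => mmSwap_adj_out h1 h2 h3 h4
  have av : ∀ {a : V}, a ≠ v → a ≠ w → (H2.Adj a v ↔ (H.Adj a v ∧ H.Adj a w)) :=
    fun h1 h2 => mmSwap_adj_v hne h1 h2
  have aw : ∀ {a : V}, a ≠ v → a ≠ w → (H2.Adj a w ↔ (H.Adj a v ∨ H.Adj a w)) :=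
    fun h1 h2 => mmSwap_adj_w hne h1 h2
  have avw : H2.Adj v w := mmSwap_adj_vw hne
  -- canonical 3K1 cases
  have L1 : ∀ z1 z2 : V, z1 ≠ v → z1 ≠ w → z2 ≠ v → z2 ≠ w →
      IsInd3 H2 v z1 z2 → False := by
    rintro z1 z2 h1v h1w h2v h2w ⟨d1, d2, d3, n1, n2, n3⟩
    have m1 : ¬ (H.Adj z1 v ∧ H.Adj z1 w) :=
      fun hh => n1 ((av h1v h1w).mpr hh).symm
    have m2 : ¬ (H.Adj z2 v ∧ H.Adj z2 w) :=
      fun hh => n2 ((av h2v h2w).mpr hh).symm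
    have m3 : ¬ H.Adj z1 z2 := fun hh => n3 ((aout h1v h1w h2v h2w).mpr hh)
    by_cases c1v : H.Adj z1 v
    · have c1w : ¬ H.Adj z1 w := fun hh => m1 ⟨c1v, hh⟩
      by_cases c2w : H.Adj z2 w
      · have c2v : ¬ H.Adj z2 v := fun hh => m2 ⟨hh, c2w⟩
        exact m3 (halpha z1 z2 h1v h1w h2v h2w d3 c1v c1w c2w c2v)
      · exact hOb.1 w z1 z2 ⟨Ne.symm h1w, Ne.symm h2w, d3,
          fun hh => c1w hh.symm, fun hh => c2w hh.symm, m3⟩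
    · by_cases c2v : H.Adj z2 v
      · have c2w : ¬ H.Adj z2 w := fun hh => m2 ⟨c2v, hh⟩
        by_cases c1w : H.Adj z1 w
        · exact m3 (halpha z2 z1 h2v h2w h1v h1w d3.symm c2v c2w c1w c1v).symm
        · exact hOb.1 w z1 z2 ⟨Ne.symm h1w, Ne.symm h2w, d3,
            fun hh => c1w hh.symm, fun hh => c2w hh.symm, m3⟩
      · exact hOb.1 v z1 z2 ⟨Ne.symm h1v, Ne.symm h2v, d3,
          fun hh => c1v hh.symm, fun hh => c2v hh.symm, m3⟩
  have L2 : ∀ z1 z2 : V, z1 ≠ v → z1 ≠ w → z2 ≠ v → z2 ≠ w →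
      IsInd3 H2 w z1 z2 → False := by
    rintro z1 z2 h1v h1w h2v h2w ⟨d1, d2, d3, n1, n2, n3⟩
    have m1 : ¬ H.Adj z1 w := fun hh =>
      n1 ((aw h1v h1w).mpr (Or.inr hh)).symm
    have m2 : ¬ H.Adj z2 w := fun hh =>
      n2 ((aw h2v h2w).mpr (Or.inr hh)).symm
    have m3 : ¬ H.Adj z1 z2 := fun hh => n3 ((aout h1v h1w h2v h2w).mpr hh)
    exact hOb.1 w z1 z2 ⟨Ne.symm h1w, Ne.symm h2w, d3,
      fun hh => m1 hh.symm, fun hh => m2 hh.symm, m3⟩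
  have L0 : ∀ x y z : V, x ≠ v → x ≠ w → y ≠ v → y ≠ w → z ≠ v → z ≠ w →
      IsInd3 H2 x y z → False := by
    rintro x y z hxv hxw hyv hyw hzv hzw ⟨d1, d2, d3, n1, n2, n3⟩
    exact hOb.1 x y z ⟨d1, d2, d3, fun hh => n1 ((aout hxv hxw hyv hyw).mpr hh),
      fun hh => n2 ((aout hxv hxw hzv hzw).mpr hh),
      fun hh => n3 ((aout hyv hyw hzv hzw).mpr hh)⟩
  have D1 : ∀ y z : V, IsInd3 H2 v y z → False := by
    intro y z h3
    obtain ⟨d1, d2, d3, n1, n2, n3⟩ := id h3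
    by_cases hyw : y = w
    · exact n1 (hyw ▸ avw)
    by_cases hzw : z = w
    · exact n2 (hzw ▸ avw)
    exact L1 y z (Ne.symm d1) hyw (Ne.symm d2) hzw h3
  have D2 : ∀ y z : V, y ≠ v → z ≠ v → IsInd3 H2 w y z → False := by
    intro y z hyv hzv h3
    obtain ⟨d1, d2, d3, n1, n2, n3⟩ := id h3
    exact L2 y z hyv (Ne.symm d1) hzv (Ne.symm d2) h3
  -- canonical C4 cases
  have Ev : ∀ b c d : V, b ≠ v → b ≠ w → c ≠ v → c ≠ w → d ≠ v → d ≠ w →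
      IsInducedC4 H2 v b c d → False := by
    rintro b c d hbv hbw hcv hcw hdv hdw ⟨e1, e2, e3, e4, n1, n2, d1, d2⟩
    obtain ⟨hbv', hbw'⟩ := (av hbv hbw).mp e1.symm
    obtain ⟨hdv', hdw'⟩ := (av hdv hdw).mp e4
    have hbc := (aout hbv hbw hcv hcw).mp e2
    have hcd := (aout hcv hcw hdv hdw).mp e3
    have hnbd : ¬ H.Adj b d := fun hh => n2 ((aout hbv hbw hdv hdw).mpr hh)
    have n1' : ¬ (H.Adj c v ∧ H.Adj c w) := fun hh => n1 ((av hcv hcw).mpr hh).symm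
    by_cases hcv' : H.Adj c v
    · have hcw' : ¬ H.Adj c w := fun hh => n1' ⟨hcv', hh⟩
      exact hOb.2.1 w b c d ⟨hbw'.symm, hbc, hcd, hdw',
        fun hh => hcw' hh.symm, hnbd, Ne.symm hcw, d2⟩
    · exact hOb.2.1 v b c d ⟨hbv'.symm, hbc, hcd, hdv',
        fun hh => hcv' hh.symm, hnbd, d1, d2⟩
  have Ew : ∀ b c d : V, b ≠ v → b ≠ w → c ≠ v → c ≠ w → d ≠ v → d ≠ w →
      IsInducedC4 H2 w b c d → False := by
    rintro b c d hbv hbw hcv hcw hdv hdw ⟨e1, e2, e3, e4, n1, n2, d1, d2⟩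
    have hbor := (aw hbv hbw).mp e1.symm
    have hdor := (aw hdv hdw).mp e4
    have hbc := (aout hbv hbw hcv hcw).mp e2
    have hcd := (aout hcv hcw hdv hdw).mp e3
    have hnbd : ¬ H.Adj b d := fun hh => n2 ((aout hbv hbw hdv hdw).mpr hh)
    have ncor : ¬ (H.Adj c v ∨ H.Adj c w) := fun hh => n1 ((aw hcv hcw).mpr hh).symm
    have ncv : ¬ H.Adj c v := fun hh => ncor (Or.inl hh)
    have ncw : ¬ H.Adj c w := fun hh => ncor (Or.inr hh)
    by_cases hbv' : H.Adj b v <;> by_cases hdv' : H.Adj d v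
    · exact hOb.2.1 v b c d ⟨hbv'.symm, hbc, hcd, hdv',
        fun hh => ncv hh.symm, hnbd, Ne.symm hcv, d2⟩
    · have hdw' : H.Adj d w := hdor.resolve_left hdv'
      by_cases hbw' : H.Adj b w
      · exact hOb.2.1 w b c d ⟨hbw'.symm, hbc, hcd, hdw',
          fun hh => ncw hh.symm, hnbd, Ne.symm hcw, d2⟩
      · exact hOb.2.2 v b c d w ⟨hbv'.symm, hbc, hcd, hdw', hvw.symm,
          fun hh => ncv hh.symm, fun hh => hdv' hh.symm, hnbd, hbw', ncw,
          Ne.symm hcv, Ne.symm hdv, d2, hbw, hcw⟩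
    · have hbw' : H.Adj b w := hbor.resolve_left hbv'
      by_cases hdw' : H.Adj d w
      · exact hOb.2.1 w b c d ⟨hbw'.symm, hbc, hcd, hdw',
          fun hh => ncw hh.symm, hnbd, Ne.symm hcw, d2⟩
      · exact hOb.2.2 v d c b w ⟨hdv'.symm, hcd.symm, hbc.symm, hbw', hvw.symm,
          fun hh => ncv hh.symm, fun hh => hbv' hh.symm,
          fun hh => hnbd hh.symm, hdw', ncw,
          Ne.symm hcv, Ne.symm hbv, d2.symm, hdw, hcw⟩
    · have hbw' : H.Adj b w := hbor.resolve_left hbv'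
      have hdw' : H.Adj d w := hdor.resolve_left hdv'
      exact hOb.2.1 w b c d ⟨hbw'.symm, hbc, hcd, hdw',
        fun hh => ncw hh.symm, hnbd, Ne.symm hcw, d2⟩
  have Evw : ∀ c d : V, IsInducedC4 H2 v w c d → False := by
    rintro c d ⟨e1, e2, e3, e4, n1, n2, d1, d2⟩
    have hdv : d ≠ v := fun hh => H2.irrefl (hh ▸ e4)
    have hdw : d ≠ w := fun hh => d2 hh.symm
    obtain ⟨hdv', hdw'⟩ := (av hdv hdw).mp e4
    exact n2 ((aw hdv hdw).mpr (Or.inr hdw')).symm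
  -- canonical C5 cases
  have Fv : ∀ c1 c2 c3 c4 : V, c1 ≠ v → c1 ≠ w → c2 ≠ v → c2 ≠ w →
      c3 ≠ v → c3 ≠ w → c4 ≠ v → c4 ≠ w → IsC5 H2 v c1 c2 c3 c4 → False := by
    rintro c1 c2 c3 c4 h1v h1w h2v h2w h3v h3w h4v h4w
      ⟨e1, e2, e3, e4, e5, n1, n2, n3, n4, n5, d1, d2, d3, d4, d5⟩
    obtain ⟨hc1v, hc1w⟩ := (av h1v h1w).mp e1.symm
    obtain ⟨hc4v, hc4w⟩ := (av h4v h4w).mp e5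
    have e2' := (aout h1v h1w h2v h2w).mp e2
    have e3' := (aout h2v h2w h3v h3w).mp e3
    have e4' := (aout h3v h3w h4v h4w).mp e4
    have n3' : ¬ H.Adj c1 c3 := fun hh => n3 ((aout h1v h1w h3v h3w).mpr hh)
    have n4' : ¬ H.Adj c1 c4 := fun hh => n4 ((aout h1v h1w h4v h4w).mpr hh)
    have n5' : ¬ H.Adj c2 c4 := fun hh => n5 ((aout h2v h2w h4v h4w).mpr hh)
    have m1 : ¬ (H.Adj c2 v ∧ H.Adj c2 w) := fun hh => n1 ((av h2v h2w).mpr hh).symm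
    have m2 : ¬ (H.Adj c3 v ∧ H.Adj c3 w) := fun hh => n2 ((av h3v h3w).mpr hh).symm
    by_cases h2v' : H.Adj c2 v <;> by_cases h3v' : H.Adj c3 v
    · have h2w' : ¬ H.Adj c2 w := fun hh => m1 ⟨h2v', hh⟩
      have h3w' : ¬ H.Adj c3 w := fun hh => m2 ⟨h3v', hh⟩
      exact hOb.2.2 w c1 c2 c3 c4 ⟨hc1w.symm, e2', e3', e4', hc4w,
        fun hh => h2w' hh.symm, fun hh => h3w' hh.symm, n3', n4', n5',
        Ne.symm h2w, Ne.symm h3w, d3, d4, d5⟩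
    · have h2w' : ¬ H.Adj c2 w := fun hh => m1 ⟨h2v', hh⟩
      by_cases h3w' : H.Adj c3 w
      · exact hOb.2.1 v c2 c3 w ⟨h2v'.symm, e3', h3w', hvw.symm,
          fun hh => h3v' hh.symm, fun hh => h2w' hh, d2, h2w⟩
      · exact hOb.2.2 w c1 c2 c3 c4 ⟨hc1w.symm, e2', e3', e4', hc4w,
          fun hh => h2w' hh.symm, fun hh => h3w' hh.symm, n3', n4', n5',
          Ne.symm h2w, Ne.symm h3w, d3, d4, d5⟩
    · have h3w' : ¬ H.Adj c3 w := fun hh => m2 ⟨h3v', hh⟩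
      by_cases h2w' : H.Adj c2 w
      · exact hOb.2.1 v c3 c2 w ⟨h3v'.symm, e3'.symm, h2w', hvw.symm,
          fun hh => h2v' hh.symm, fun hh => h3w' hh, d1, h3w⟩
      · exact hOb.2.2 w c1 c2 c3 c4 ⟨hc1w.symm, e2', e3', e4', hc4w,
          fun hh => h2w' hh.symm, fun hh => h3w' hh.symm, n3', n4', n5',
          Ne.symm h2w, Ne.symm h3w, d3, d4, d5⟩
    · exact hOb.2.2 v c1 c2 c3 c4 ⟨hc1v.symm, e2', e3', e4', hc4v,
        fun hh => h2v' hh.symm, fun hh => h3v' hh.symm, n3', n4', n5',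
        d1, d2, d3, d4, d5⟩
  have Fw : ∀ c1 c2 c3 c4 : V, c1 ≠ v → c1 ≠ w → c2 ≠ v → c2 ≠ w →
      c3 ≠ v → c3 ≠ w → c4 ≠ v → c4 ≠ w → IsC5 H2 w c1 c2 c3 c4 → False := by
    rintro c1 c2 c3 c4 h1v h1w h2v h2w h3v h3w h4v h4w
      ⟨e1, e2, e3, e4, e5, n1, n2, n3, n4, n5, d1, d2, d3, d4, d5⟩
    have e2' := (aout h1v h1w h2v h2w).mp e2
    have e3' := (aout h2v h2w h3v h3w).mp e3
    have e4' := (aout h3v h3w h4v h4w).mp e4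
    have n3' : ¬ H.Adj c1 c3 := fun hh => n3 ((aout h1v h1w h3v h3w).mpr hh)
    have n4' : ¬ H.Adj c1 c4 := fun hh => n4 ((aout h1v h1w h4v h4w).mpr hh)
    have n5' : ¬ H.Adj c2 c4 := fun hh => n5 ((aout h2v h2w h4v h4w).mpr hh)
    have m1 : ¬ (H.Adj c2 v ∨ H.Adj c2 w) := fun hh => n1 ((aw h2v h2w).mpr hh).symm
    have m2 : ¬ (H.Adj c3 v ∨ H.Adj c3 w) := fun hh => n2 ((aw h3v h3w).mpr hh).symm
    by_cases h4v' : H.Adj c4 v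
    · by_cases h1v' : H.Adj c1 v
      · exact hOb.2.2 v c1 c2 c3 c4 ⟨h1v'.symm, e2', e3', e4', h4v',
          fun hh => m1 (Or.inl hh.symm), fun hh => m2 (Or.inl hh.symm),
          n3', n4', n5', Ne.symm h2v, Ne.symm h3v, d3, d4, d5⟩
      · exact hOb.1 v c3 c1 ⟨Ne.symm h3v, Ne.symm h1v, d3.symm,
          fun hh => m2 (Or.inl hh.symm), fun hh => h1v' hh.symm,
          fun hh => n3' hh.symm⟩
    · exact hOb.1 v c2 c4 ⟨Ne.symm h2v, Ne.symm h4v, d5,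
        fun hh => m1 (Or.inl hh.symm), fun hh => h4v' hh.symm, n5'⟩
  have Fvw : ∀ c1 c2 c3 : V, IsC5 H2 v w c1 c2 c3 → False := by
    rintro c1 c2 c3 ⟨e1, e2, e3, e4, e5, n1, n2, n3, n4, n5, d1, d2, d3, d4, d5⟩
    have h3v : c3 ≠ v := fun hh => H2.irrefl (hh ▸ e5)
    have h3w : c3 ≠ w := fun hh => d4 hh.symm
    obtain ⟨h3v', h3w'⟩ := (av h3v h3w).mp e5
    exact n4 ((aw h3v h3w).mpr (Or.inr h3w')).symm
  refine ⟨?_, ?_, ?_⟩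
  · intro x y z h3
    by_cases hxv : x = v
    · exact D1 y z (hxv ▸ h3)
    by_cases hyv : y = v
    · exact D1 x z (hyv ▸ h3.perm12)
    by_cases hzv : z = v
    · exact D1 y x (hzv ▸ h3.perm13)
    by_cases hxw : x = w
    · exact D2 y z hyv hzv (hxw ▸ h3)
    by_cases hyw : y = w
    · exact D2 x z hxv hzv (hyw ▸ h3.perm12)
    by_cases hzw : z = w
    · exact D2 y x hyv hxv (hzw ▸ h3.perm13)
    exact L0 x y z hxv hxw hyv hyw hzv hzw h3
  · -- C4 dispatcher
    intro a b c d h4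
    -- helper handling a C4 whose first vertex is v
    have hv_front : ∀ b c d : V, IsInducedC4 H2 v b c d → False := by
      intro b c d h4
      obtain ⟨e1, e2, e3, e4, n1, n2, d1, d2⟩ := id h4
      have hbv : b ≠ v := fun hh => H2.irrefl (hh ▸ e1)
      have hcv : c ≠ v := fun hh => d1 hh.symm
      have hdv : d ≠ v := fun hh => H2.irrefl (hh ▸ e4)
      by_cases hbw : b = w
      · exact Evw c d (hbw ▸ h4)
      by_cases hcw : c = w
      · exact n1 (hcw ▸ avw)
      by_cases hdw : d = w
      · exact Evw c b (hdw ▸ h4.reflect)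
      exact Ev b c d hbv hbw hcv hcw hdv hdw h4
    have hw_front : ∀ b c d : V, b ≠ v → c ≠ v → d ≠ v →
        IsInducedC4 H2 w b c d → False := by
      intro b c d hbv hcv hdv h4
      obtain ⟨e1, e2, e3, e4, n1, n2, d1, d2⟩ := id h4
      have hbw : b ≠ w := fun hh => H2.irrefl (hh ▸ e1)
      have hcw : c ≠ w := fun hh => d1 hh.symm
      have hdw : d ≠ w := fun hh => H2.irrefl (hh ▸ e4)
      exact Ew b c d hbv hbw hcv hcw hdv hdw h4
    by_cases hav : a = v
    · exact hv_front b c d (hav ▸ h4)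
    by_cases hbv : b = v
    · exact hv_front c d a (hbv ▸ h4.rotate)
    by_cases hcv : c = v
    · exact hv_front d a b (hcv ▸ h4.rotate.rotate)
    by_cases hdv : d = v
    · exact hv_front a b c (hdv ▸ h4.rotate.rotate.rotate)
    by_cases haw : a = w
    · exact hw_front b c d hbv hcv hdv (haw ▸ h4)
    by_cases hbw : b = w
    · exact hw_front c d a hcv hdv hav (hbw ▸ h4.rotate)
    by_cases hcw : c = w
    · exact hw_front d a b hdv hav hbv (hcw ▸ h4.rotate.rotate)
    by_cases hdw : d = w
    · exact hw_front a b c hav hbv hcv (hdw ▸ h4.rotate.rotate.rotate)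
    obtain ⟨e1, e2, e3, e4, n1, n2, d1, d2⟩ := id h4
    exact hOb.2.1 a b c d ⟨(aout hav haw hbv hbw).mp e1, (aout hbv hbw hcv hcw).mp e2,
      (aout hcv hcw hdv hdw).mp e3, (aout hdv hdw hav haw).mp e4,
      fun hh => n1 ((aout hav haw hcv hcw).mpr hh),
      fun hh => n2 ((aout hbv hbw hdv hdw).mpr hh), d1, d2⟩
  · -- C5 dispatcher
    intro a b c d e h5
    have hv_front5 : ∀ c1 c2 c3 c4 : V, IsC5 H2 v c1 c2 c3 c4 → False := by
      intro c1 c2 c3 c4 h5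
      obtain ⟨e1, e2, e3, e4, e5, n1, n2, n3, n4, n5, d1, d2, d3, d4, d5⟩ := id h5
      have h1v : c1 ≠ v := fun hh => H2.irrefl (hh ▸ e1)
      have h2v : c2 ≠ v := fun hh => d1 hh.symm
      have h3v : c3 ≠ v := fun hh => d2 hh.symm
      have h4v : c4 ≠ v := fun hh => H2.irrefl (hh ▸ e5)
      by_cases h1w : c1 = w
      · exact Fvw c2 c3 c4 (h1w ▸ h5)
      by_cases h2w : c2 = w
      · exact n1 (h2w ▸ avw)
      by_cases h3w : c3 = w
      · exact n2 (h3w ▸ avw)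
      by_cases h4w : c4 = w
      · exact Fvw c3 c2 c1 (h4w ▸ h5.reflect)
      exact Fv c1 c2 c3 c4 h1v h1w h2v h2w h3v h3w h4v h4w h5
    have hw_front5 : ∀ c1 c2 c3 c4 : V, c1 ≠ v → c2 ≠ v → c3 ≠ v → c4 ≠ v →
        IsC5 H2 w c1 c2 c3 c4 → False := by
      intro c1 c2 c3 c4 h1v h2v h3v h4v h5
      obtain ⟨e1, e2, e3, e4, e5, n1, n2, n3, n4, n5, d1, d2, d3, d4, d5⟩ := id h5
      have h1w : c1 ≠ w := fun hh => H2.irrefl (hh ▸ e1)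
      have h2w : c2 ≠ w := fun hh => d1 hh.symm
      have h3w : c3 ≠ w := fun hh => d2 hh.symm
      have h4w : c4 ≠ w := fun hh => H2.irrefl (hh ▸ e5)
      exact Fw c1 c2 c3 c4 h1v h1w h2v h2w h3v h3w h4v h4w h5
    by_cases hav : a = v
    · exact hv_front5 b c d e (hav ▸ h5)
    by_cases hbv : b = v
    · exact hv_front5 c d e a (hbv ▸ h5.rotate)
    by_cases hcv : c = v
    · exact hv_front5 d e a b (hcv ▸ h5.rotate.rotate)
    by_cases hdv : d = v
    · exact hv_front5 e a b c (hdv ▸ h5.rotate.rotate.rotate)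
    by_cases hev : e = v
    · exact hv_front5 a b c d (hev ▸ h5.rotate.rotate.rotate.rotate)
    by_cases haw : a = w
    · exact hw_front5 b c d e hbv hcv hdv hev (haw ▸ h5)
    by_cases hbw : b = w
    · exact hw_front5 c d e a hcv hdv hev hav (hbw ▸ h5.rotate)
    by_cases hcw : c = w
    · exact hw_front5 d e a b hdv hev hav hbv (hcw ▸ h5.rotate.rotate)
    by_cases hdw : d = w
    · exact hw_front5 e a b c hev hav hbv hcv (hdw ▸ h5.rotate.rotate.rotate)
    by_cases hew : e = w
    · exact hw_front5 a b c d hav hbv hcv hdv (hew ▸ h5.rotate.rotate.rotate.rotate)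
    obtain ⟨e1, e2, e3, e4, e5, n1, n2, n3, n4, n5, d1, d2, d3, d4, d5⟩ := id h5
    exact hOb.2.2 a b c d e ⟨(aout hav haw hbv hbw).mp e1,
      (aout hbv hbw hcv hcw).mp e2, (aout hcv hcw hdv hdw).mp e3,
      (aout hdv hdw hev hew).mp e4, (aout hev hew hav haw).mp e5,
      fun hh => n1 ((aout hav haw hcv hcw).mpr hh),
      fun hh => n2 ((aout hav haw hdv hdw).mpr hh),
      fun hh => n3 ((aout hbv hbw hdv hdw).mpr hh),
      fun hh => n4 ((aout hbv hbw hev hew).mpr hh),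
      fun hh => n5 ((aout hcv hcw hev hew).mpr hh), d1, d2, d3, d4, d5⟩

end MinMaxMain


section ContextLemmas

variable {V : Type*}

private lemma pairwise5 {α : Type*} {R : α → α → Prop} {a b c d e : α}
    (h1 : R a b) (h2 : R a c) (h3 : R a d) (h4 : R a e) (h5 : R b c)
    (h6 : R b d) (h7 : R b e) (h8 : R c d) (h9 : R c e) (h10 : R d e) :
    List.Pairwise R [a, b, c, d, e] := by
  refine List.Pairwise.cons ?_ (List.Pairwise.cons ?_ (List.Pairwise.cons ?_
    (List.Pairwise.cons ?_ (List.pairwise_singleton _ _))))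
  · intro y hy
    rcases List.mem_cons.mp hy with rfl | hy
    · exact h1
    rcases List.mem_cons.mp hy with rfl | hy
    · exact h2
    rcases List.mem_cons.mp hy with rfl | hy
    · exact h3
    rcases List.mem_cons.mp hy with rfl | hy
    · exact h4
    · rcases List.mem_nil_iff y |>.mp hy with ⟨⟩
  · intro y hy
    rcases List.mem_cons.mp hy with rfl | hy
    · exact h5
    rcases List.mem_cons.mp hy with rfl | hy
    · exact h6
    rcases List.mem_singleton.mp hy with rfl
    exact h7
  · intro y hy
    rcases List.mem_cons.mp hy with rfl | hy
    · exact h8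
    rcases List.mem_singleton.mp hy with rfl
    exact h9
  · intro y hy
    rcases List.mem_singleton.mp hy with rfl
    exact h10

lemma kj_disj {G : SimpleGraph V} {p : ℕ} {b : Fin p → V} {N L R C : Set V}
    (h : KJoinWith G b N L R C) :
    Disjoint (Set.range b) N ∧ Disjoint (Set.range b) L ∧ Disjoint (Set.range b) R ∧
    Disjoint (Set.range b) C ∧ Disjoint N L ∧ Disjoint N R ∧ Disjoint N C ∧
    Disjoint L R ∧ Disjoint L C ∧ Disjoint R C := by
  have hd := h.disj
  simp only [List.pairwise_cons, List.mem_cons, List.mem_singleton,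
    List.not_mem_nil, List.Pairwise.nil, and_true, List.mem_nil_iff] at hd
  refine ⟨?_, ?_, ?_, ?_, ?_, ?_, ?_, ?_, ?_, ?_⟩ <;>
    first
      | exact hd.1 _ (by tauto)
      | exact hd.2.1 _ (by tauto)
      | exact hd.2.2.1 _ (by tauto)
      | exact hd.2.2.2.1 _ (by tauto)

lemma KJoinWith.reverse {G : SimpleGraph V} {p : ℕ} {b : Fin p → V} {N L R C : Set V}
    (h : KJoinWith G b N L R C) : KJoinWith G (b ∘ Fin.rev) N R L C := by
  obtain ⟨d1, d2, d3, d4, d5, d6, d7, d8, d9, d10⟩ := kj_disj h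
  have hrange : Set.range (b ∘ Fin.rev) = Set.range b :=
    Fin.rev_surjective.range_comp b
  have hrevval : ∀ i : Fin p, (Fin.rev i).val = p - 1 - i.val := by
    intro i; rw [Fin.val_rev]; omega
  refine ⟨h.inj.comp Fin.rev_injective, ?_, ?_, ?_, ?_, ?_, ?_, ?_, ?_, ?_, ?_, ?_⟩
  · intro i j hij
    exact h.clique _ _ (fun hh => hij (Fin.rev_injective hh))
  · intro v hv
    rw [hrange] at hv
    have := h.cover v hv
    rw [Set.union_right_comm N L R] at this
    exact this
  · refine pairwise5 ?_ ?_ ?_ ?_ d6 d5 d7 d8.symm d10 d9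
    · rw [hrange]; exact d1
    · rw [hrange]; exact d3
    · rw [hrange]; exact d2
    · rw [hrange]; exact d4
  · exact fun v hv i => h.nAdj v hv _
  · exact fun v hv i => h.cNotAdj v hv _
  · intro v hv
    rw [Set.union_comm R L] at hv
    obtain ⟨i, hi⟩ := h.lrAdj v hv
    exact ⟨Fin.rev i, by rwa [Function.comp_apply, Fin.rev_rev]⟩
  · intro v hv
    rw [Set.union_comm R L] at hv
    obtain ⟨i, hi⟩ := h.lrNotAll v hv
    exact ⟨Fin.rev i, by rwa [Function.comp_apply, Fin.rev_rev]⟩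
  · intro r hr i hi
    apply h.lLast r hr
    rw [hrevval]; omega
  · intro x hx i hi
    apply h.rFirst x hx
    rw [hrevval]
    have := i.isLt
    omega
  · intro i j hij r hr
    have hji : (Fin.rev j).val + 1 = (Fin.rev i).val := by
      rw [hrevval, hrevval]
      have := j.isLt
      omega
    exact fun hadj => h.lMono (Fin.rev j) (Fin.rev i) hji r hr hadj
  · intro i j hij x hx
    have hji : (Fin.rev j).val + 1 = (Fin.rev i).val := by
      rw [hrevval, hrevval]
      have := j.isLt
      omega
    exact fun hadj => h.rMono (Fin.rev j) (Fin.rev i) hji x hx hadj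

variable {G : SimpleGraph V} {p : ℕ} {b : Fin p → V} {N L C : Set V}

lemma lc_clique (h : KJoinWith G b N L ∅ C)
    (hclean : ∀ i : Fin p, ¬ InInd3 G (b i) ∧ ¬ InC4 G (b i)) (hp : 0 < p) :
    ∀ z ∈ L ∪ C, ∀ z' ∈ L ∪ C, z ≠ z' → G.Adj z z' := by
  obtain ⟨d1, d2, d3, d4, d5, d6, d7, d8, d9, d10⟩ := kj_disj h
  intro z hz z' hz' hne
  by_contra hnadj
  set last : Fin p := ⟨p - 1, Nat.sub_lt hp Nat.one_pos⟩ with hlast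
  have hnz : ∀ u ∈ L ∪ C, ¬ G.Adj u (b last) := by
    intro u hu
    rcases hu with hu | hu
    · exact h.lLast u hu last rfl
    · exact fun hh => h.cNotAdj u hu last hh
  have hbz : b last ≠ z := by
    intro hh
    rcases hz with hz | hz
    · exact Set.disjoint_left.mp d2 ⟨last, hh⟩ hz
    · exact Set.disjoint_left.mp d4 ⟨last, hh⟩ hz
  have hbz' : b last ≠ z' := by
    intro hh
    rcases hz' with hz' | hz'
    · exact Set.disjoint_left.mp d2 ⟨last, hh⟩ hz'
    · exact Set.disjoint_left.mp d4 ⟨last, hh⟩ hz'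
  exact (hclean last).1 ⟨z, z', hbz, hbz', hne,
    fun hh => hnz z hz hh.symm, fun hh => hnz z' hz' hh.symm, hnadj⟩

lemma l_prefix (h : KJoinWith G b N L ∅ C) :
    ∀ x ∈ L, ∀ i j : Fin p, i ≤ j → G.Adj x (b j) → G.Adj x (b i) := by
  intro x hx
  suffices H : ∀ d : ℕ, ∀ i j : Fin p, i.val + d = j.val →
      G.Adj x (b j) → G.Adj x (b i) by
    intro i j hij hadj
    exact H (j.val - i.val) i j (by omega) hadj
  intro d
  induction d with
  | zero =>
    intro i j hij hadj
    have : i = j := Fin.ext (by omega)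
    rwa [this]
  | succ n ih =>
    intro i j hij hadj
    have hmid : i.val + n < p := by have := j.isLt; omega
    have h1 : (⟨i.val + n, hmid⟩ : Fin p).val + 1 = j.val := by simp; omega
    have h2 := h.lMono ⟨i.val + n, hmid⟩ j h1 x hx hadj.symm
    exact ih i ⟨i.val + n, hmid⟩ (by simp) h2.symm

lemma lc_mono (h : KJoinWith G b N L ∅ C)
    (hclean : ∀ i : Fin p, ¬ InInd3 G (b i) ∧ ¬ InC4 G (b i)) :
    ∀ x : V, (∀ i, G.Adj x (b i)) → ∀ z ∈ L ∪ C, ∀ z' ∈ L ∪ C,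
      G.Adj x z → ¬ G.Adj x z' → ∀ j, G.Adj z' (b j) → G.Adj z (b j) := by
  obtain ⟨d1, d2, d3, d4, d5, d6, d7, d8, d9, d10⟩ := kj_disj h
  intro x hx z hz z' hz' hxz hxz' j hz'j
  by_contra hzj
  have hp : 0 < p := j.pos
  have hne : z ≠ z' := fun hh => hxz' (hh ▸ hxz)
  have hzz' : G.Adj z z' := lc_clique h hclean hp z hz z' hz' hne
  have hz'L : z' ∈ L := by
    rcases hz' with hh | hh
    · exact hh
    · exact absurd hz'j (h.cNotAdj z' hh j)
  have hxz'ne : x ≠ z' := by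
    intro hh
    obtain ⟨i, hni⟩ := h.lrNotAll z' (Or.inl hz'L)
    exact hni (hh ▸ hx i)
  have hzb : z ≠ b j := by
    intro hh
    rcases hz with hzz | hzz
    · exact Set.disjoint_left.mp d2 ⟨j, hh.symm⟩ hzz
    · exact Set.disjoint_left.mp d4 ⟨j, hh.symm⟩ hzz
  exact (hclean j).2 ⟨x, z, z', b j,
    ⟨hxz, hzz', hz'j, (hx j).symm, hxz', hzj, hxz'ne, hzb⟩,
    Or.inr (Or.inr (Or.inr rfl))⟩

lemma exists_untouched_anchor {k : ℕ}
    (hcl : ∀ i j : Fin p, i ≠ j → G.Adj (b i) (b j))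
    (F : Finset (Sym2 V)) (hcard : F.card ≤ k) (hF : ∀ e ∈ F, e ∉ G.edgeSet)
    (I : Finset (Fin p)) (hI : k + 1 ≤ I.card) :
    ∃ i ∈ I, ∀ e ∈ F, b i ∉ e := by
  classical
  by_contra hcon
  push_neg at hcon
  choose f hf1 hf2 using hcon
  set g : {i // i ∈ I} → Sym2 V := fun x => f x.1 x.2 with hg
  have hinj : Set.InjOn g (↑I.attach : Set {i // i ∈ I}) := by
    rintro ⟨i1, hi1⟩ - ⟨i2, hi2⟩ - heq
    have hne' : i1 = i2 → (⟨i1, hi1⟩ : {i // i ∈ I}) = ⟨i2, hi2⟩ := fun hh => Subtype.ext hh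
    apply hne'
    by_contra hne
    have h1 := hf2 i1 hi1
    have h2 := hf2 i2 hi2
    have heq' : f i1 hi1 = f i2 hi2 := heq
    rw [heq'] at h1
    have hbne : b i1 ≠ b i2 := (hcl i1 i2 hne).ne
    have : f i2 hi2 ∈ G.edgeSet := by
      revert h1 h2
      induction f i2 hi2 using Sym2.ind with
      | _ a c =>
        intro h1 h2
        rw [Sym2.mem_iff] at h1 h2
        rw [SimpleGraph.mem_edgeSet _]
        rcases h1 with h1 | h1 <;> rcases h2 with h2 | h2
        · exact absurd (h1 ▸ h2 ▸ rfl : b i1 = b i2) hbne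
        · rw [← h1, ← h2]; exact hcl i1 i2 hne
        · rw [← h1, ← h2]; exact (hcl i1 i2 hne).symm
        · exact absurd (h1 ▸ h2 ▸ rfl : b i1 = b i2) hbne
    exact hF _ (hf1 i2 hi2) this
  have hc2 := Finset.card_le_card_of_injOn g (fun i _ => hf1 i.1 i.2) hinj
  rw [Finset.card_attach] at hc2
  omega

end ContextLemmas



section BackwardCore

variable {V : Type*}

lemma backward_core [Fintype V] (G : SimpleGraph V) (k p : ℕ) (b : Fin p → V)
    (N L C : Set V) (h : KJoinWith G b N L ∅ C)
    (hclean : ∀ i : Fin p, ¬ InInd3 G (b i) ∧ ¬ InC4 G (b i))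
    (hp : 2 * (k + 1) ≤ p)
    (hF : ∃ F, IsBccKCompletion
      (addUniv G (b '' {i : Fin p | k + 1 ≤ i.val ∧ i.val + k + 2 ≤ p})) k F) :
    ∃ F : Finset (Sym2 V), IsBccKCompletion G k F := by
  classical
  obtain ⟨dj1, dj2, dj3, dj4, dj5, dj6, dj7, dj8, dj9, dj10⟩ := kj_disj h
  set S : Set (Fin p) := {i : Fin p | k + 1 ≤ i.val ∧ i.val + k + 2 ≤ p} with hSdef
  set Ms : Set V := b '' S with hMsdef
  set GU : SimpleGraph V := addUniv G Ms with hGUdef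
  have hmemMs : ∀ i : Fin p, b i ∈ Ms ↔ i ∈ S := fun i => h.inj.mem_set_image
  have hLC_Ms : ∀ z, z ∈ L ∪ C → z ∉ Ms := by
    rintro z hz ⟨i, -, rfl⟩
    rcases hz with hz | hz
    · exact Set.disjoint_left.mp dj2 ⟨i, rfl⟩ hz
    · exact Set.disjoint_left.mp dj4 ⟨i, rfl⟩ hz
  have hN_Ms : ∀ z ∈ N, z ∉ Ms := by
    rintro z hz ⟨i, -, rfl⟩
    exact Set.disjoint_left.mp dj1 ⟨i, rfl⟩ hz
  have hbLC : ∀ (i : Fin p), ∀ z ∈ L ∪ C, b i ≠ z := by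
    rintro i z hz rfl
    rcases hz with hz | hz
    · exact Set.disjoint_left.mp dj2 ⟨i, rfl⟩ hz
    · exact Set.disjoint_left.mp dj4 ⟨i, rfl⟩ hz
  have hbN : ∀ (i : Fin p), ∀ z ∈ N, b i ≠ z := by
    rintro i z hz rfl
    exact Set.disjoint_left.mp dj1 ⟨i, rfl⟩ hz
  have hnonNbrLC : ∀ (i : Fin p) (x : V), x ≠ b i → ¬ G.Adj (b i) x →
      x ∈ L ∪ C := by
    intro i x hne hnadj
    by_cases hx : x ∈ Set.range b
    · obtain ⟨j, rfl⟩ := hx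
      exact absurd (h.clique i j (fun hh => hne (by rw [hh]))) hnadj
    rcases h.cover x hx with ((hx' | hx') | hx') | hx'
    · exact absurd ((h.nAdj x hx' i).symm) hnadj
    · exact Or.inl hx'
    · exact absurd hx' (Set.notMem_empty x)
    · exact Or.inr hx'
  have hnbrL : ∀ (i : Fin p) (x : V), x ∈ L ∪ C → G.Adj x (b i) → x ∈ L := by
    intro i x hx hadj
    rcases hx with hx | hx
    · exact hx
    · exact absurd hadj (h.cNotAdj x hx i)
  have hty : ∀ (i : Fin p) (x : V), G.Adj (b i) x →
      (x ∈ Set.range b ∨ x ∈ N) ∨ x ∈ L ∪ C := by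
    intro i x hx
    by_cases hxr : x ∈ Set.range b
    · exact Or.inl (Or.inl hxr)
    rcases h.cover x hxr with ((h' | h') | h') | h'
    · exact Or.inl (Or.inr h')
    · exact Or.inr (Or.inl h')
    · exact absurd h' (Set.notMem_empty x)
    · exact Or.inr (Or.inr h')
  set tw : V → ℕ :=
    fun z => (Finset.univ.filter (fun j : Fin p => G.Adj z (b j))).card with htw
  have htwle : ∀ z, tw z ≤ p := by
    intro z
    calc tw z ≤ (Finset.univ : Finset (Fin p)).card :=
          Finset.card_le_card (Finset.filter_subset _ _)
    _ = p := by simp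
  set wt : Sym2 V → ℕ := Sym2.lift ⟨fun a c => (p + 1 - tw a) + (p + 1 - tw c),
    fun a c => by ring⟩ with hwt
  have hwtmk : ∀ a c : V, wt s(a, c) = (p + 1 - tw a) + (p + 1 - tw c) :=
    fun a c => rfl
  set Phi : Finset (Sym2 V) → ℕ := fun F => F.sum wt with hPhi
  obtain ⟨F0, hd0, he0, hc0, hch0⟩ := hF
  suffices Hrec : ∀ n : ℕ, ∀ F : Finset (Sym2 V), Phi F ≤ n →
      (∀ e ∈ F, ¬ e.IsDiag) → (∀ e ∈ F, e ∉ GU.edgeSet) → F.card ≤ k →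
      ObFree (addEdges GU F) → ∃ F', IsBccKCompletion G k F' by
    exact Hrec (Phi F0) F0 le_rfl hd0 he0 hc0 (obFree_of_bicliqueChain hch0)
  intro n
  induction n using Nat.strong_induction_on with
  | _ n ih =>
  intro F hPhiF hdiag hedge hcard hOb
  set H : SimpleGraph V := addEdges G F with hHdef
  set HU : SimpleGraph V := addEdges GU F with hHUdef
  have havoid : ∀ e ∈ F, ∀ z ∈ Ms, z ∉ e := by
    intro e he z hz hze
    induction e with
    | _ a c =>
      have hne : a ≠ c := by
        intro hh
        exact hdiag _ he (by rw [hh]; exact Sym2.mk_isDiag_iff.mpr rfl)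
      rw [Sym2.mem_iff] at hze
      rcases hze with rfl | rfl
      · exact hedge _ he ((SimpleGraph.mem_edgeSet _).mpr (addUniv_adj_of_mem hz hne))
      · exact hedge _ he ((SimpleGraph.mem_edgeSet _).mpr
          ((addUniv_adj_of_mem hz (Ne.symm hne)).symm))
  have T2 : ∀ (m : V), m ∈ Ms → ∀ z, (H.Adj m z ↔ G.Adj m z) := by
    intro m hm z
    rw [hHdef, addEdges_adj]
    constructor
    · rintro (hh | ⟨hh, -⟩)
      · exact hh
      · exact absurd (Sym2.mem_mk_left m z) (havoid _ hh m hm)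
    · exact Or.inl
  have T1 : ∀ {a c : V}, a ∉ Ms → c ∉ Ms → (HU.Adj a c ↔ H.Adj a c) := by
    intro a c ha hc
    rw [hHUdef, hHdef, addEdges_adj, addEdges_adj, hGUdef,
      addUniv_adj_of_not_mem ha hc]
  have hlate : ∃ l : Fin p, (p ≤ l.val + k + 1) ∧ ∀ e ∈ F, b l ∉ e := by
    have hcl : ∀ i j : Fin p, i ≠ j → GU.Adj (b i) (b j) :=
      fun i j hij => le_addUniv (h.clique i j hij)
    have hIcard : k + 1 ≤ (Finset.univ.filter
        (fun i : Fin p => p ≤ i.val + k + 1)).card := by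
      have hinj2 : (Finset.univ : Finset (Fin (k + 1))).card ≤
          (Finset.univ.filter (fun i : Fin p => p ≤ i.val + k + 1)).card :=
        Finset.card_le_card_of_injOn
        (fun j : Fin (k + 1) => (⟨p - 1 - j.val, by omega⟩ : Fin p))
        (fun j _ => by
          refine Finset.mem_filter.mpr ⟨Finset.mem_univ _, ?_⟩
          show p ≤ p - 1 - j.val + k + 1
          have := j.isLt
          omega)
        (by
          rintro ⟨j1, hj1⟩ - ⟨j2, hj2⟩ - heq
          have hval : p - 1 - j1 = p - 1 - j2 := congrArg Fin.val heq
          exact Fin.ext (show j1 = j2 by omega))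
      simpa using hinj2
    obtain ⟨l, hl1, hl2⟩ := exists_untouched_anchor hcl F hcard hedge _ hIcard
    exact ⟨l, (Finset.mem_filter.mp hl1).2, hl2⟩
  obtain ⟨l, hlval, hlunt⟩ := hlate
  have hblMs : b l ∉ Ms := by
    intro hh
    have h2 := (hmemMs l).mp hh
    rw [hSdef] at h2
    obtain ⟨-, h2⟩ := h2
    omega
  have huL : ∀ z, z ∉ Ms → ¬ G.Adj (b l) z → ¬ HU.Adj (b l) z := by
    intro z hz hnadj hadj
    rw [hHUdef, addEdges_adj] at hadj
    rcases hadj with hadj | ⟨hmem, -⟩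
    · rw [hGUdef, addUniv_adj_of_not_mem hblMs hz] at hadj
      exact hnadj hadj
    · exact hlunt _ hmem (Sym2.mem_mk_left _ _)
  have hlnon : ∀ z, z ∈ L ∪ C → ∀ i : Fin p, i ∈ S → ¬ G.Adj (b i) z →
      ¬ HU.Adj (b l) z := by
    intro z hz i hiS hnadj
    apply huL z (hLC_Ms z hz)
    intro hadj
    have hzL : z ∈ L := hnbrL l z hz hadj.symm
    have hil : i ≤ l := by
      rw [hSdef] at hiS
      obtain ⟨h1, h2⟩ := hiS
      exact Fin.le_def.mpr (by omega)
    exact hnadj (l_prefix h z hzL i l hil hadj.symm).symm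
  have hlBN : ∀ z, (z ∈ Set.range b ∨ z ∈ N) → z ≠ b l → HU.Adj (b l) z := by
    intro z hz hne
    have hG : G.Adj (b l) z := by
      rcases hz with ⟨j, rfl⟩ | hz
      · exact h.clique l j (fun hh => hne (congrArg b hh.symm))
      · exact (h.nAdj z hz l).symm
    exact adj_addEdges_of_adj (le_addUniv hG)
  by_cases hbad : ∃ (i : Fin p) (u v w : V), i ∈ S ∧ IsInducedC4 H (b i) u v w
  · obtain ⟨i, u0, v0, w0, hiS, h4⟩ := hbad
    have hm : b i ∈ Ms := (hmemMs i).mpr hiS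
    have hvfacts : ∀ u v w : V, IsInducedC4 H (b i) u v w →
        v ∈ L ∪ C ∧ ¬ G.Adj (b i) v := by
      rintro u v w ⟨e1, e2, e3, e4, n1, n2, dd1, dd2⟩
      have hnG : ¬ G.Adj (b i) v := fun hh => n1 ((T2 _ hm v).mpr hh)
      exact ⟨hnonNbrLC i v (fun hh => dd1 hh.symm) hnG, hnG⟩
    have main : ∀ u v w : V, IsInducedC4 H (b i) u v w → w ∈ L ∪ C →
        (u ∈ Set.range b ∨ u ∈ N) → ∃ F', IsBccKCompletion G k F' := by
      rintro u v w h4 hwLC huBN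
      obtain ⟨hvLC, hnGv⟩ := hvfacts u v w h4
      obtain ⟨e1, e2, e3, e4, n1, n2, dd1, dd2⟩ := id h4
      have hGmu : G.Adj (b i) u := (T2 _ hm u).mp e1
      have hGmw : G.Adj (b i) w := (T2 _ hm w).mp e4.symm
      have hwL : w ∈ L := hnbrL i w hwLC hGmw.symm
      have hvMs := hLC_Ms v hvLC
      have hwMs := hLC_Ms w hwLC
      have hvw_ne : v ≠ w := e3.ne
      have hGvw : G.Adj v w := lc_clique h hclean i.pos v hvLC w hwLC hvw_ne
      have hnGuw : ¬ G.Adj u w := fun hh => n2 (adj_addEdges_of_adj hh)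
      have hnGuv : ¬ G.Adj u v := by
        intro hh
        exact (hclean i).2 ⟨u, v, w, b i,
          ⟨hh, hGvw, hGmw.symm, hGmu, hnGuw, fun h2 => hnGv h2.symm, dd2, Ne.symm dd1⟩,
          Or.inr (Or.inr (Or.inr rfl))⟩
      have huvF : s(u, v) ∈ F := by
        rw [hHdef, addEdges_adj] at e2
        rcases e2 with e2' | ⟨e2', -⟩
        · exact absurd e2' hnGuv
        · exact e2'
      have huMs : u ∉ Ms := fun hh => havoid _ huvF u hh (Sym2.mem_mk_left u v)
      have huv_ne : u ≠ v := e2.ne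
      have hune_w : u ≠ w := dd2
      have hHUvw : HU.Adj v w := (T1 hvMs hwMs).mpr e3
      have hdom : ∀ z, z ≠ v → z ≠ w → GU.Adj z v → GU.Adj z w := by
        intro z hzv hzw hadj
        by_cases hzMs : z ∈ Ms
        · exact addUniv_adj_of_mem hzMs hzw
        rw [hGUdef, addUniv_adj_of_not_mem hzMs hvMs] at hadj
        have hG : G.Adj z w := by
          by_cases hzr : z ∈ Set.range b
          · obtain ⟨j, rfl⟩ := hzr
            have hvL : v ∈ L := hnbrL j v hvLC hadj.symm
            by_contra hnzw
            have hij : i < j := by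
              by_contra hji
              push_neg at hji
              exact hnzw ((l_prefix h w hwL j i hji hGmw.symm).symm)
            exact hnGv ((l_prefix h v hvL i j (le_of_lt hij) hadj.symm).symm)
          rcases h.cover z hzr with ((hz' | hz') | hz') | hz'
          · by_contra hnzw
            exact hnGv ((lc_mono h hclean z (fun j => h.nAdj z hz' j)
              v hvLC w hwLC hadj hnzw i hGmw.symm).symm)
          · exact lc_clique h hclean i.pos z (Or.inl hz') w hwLC hzw
          · exact absurd hz' (Set.notMem_empty z)
          · exact lc_clique h hclean i.pos z (Or.inr hz') w hwLC hzw
        exact le_addUniv hG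
      have halpha : ∀ z1 z2 : V, z1 ≠ v → z1 ≠ w → z2 ≠ v → z2 ≠ w → z1 ≠ z2 →
          HU.Adj z1 v → ¬ HU.Adj z1 w → HU.Adj z2 w → ¬ HU.Adj z2 v →
          HU.Adj z1 z2 := by
        intro z1 z2 h1v h1w h2v h2w h12 a1v a1w a2w a2v
        by_contra hn12
        have hz1Ms : z1 ∉ Ms := by
          intro hh
          exact a1w (adj_addEdges_of_adj (addUniv_adj_of_mem hh h1w))
        have hz2Ms : z2 ∉ Ms := by
          intro hh
          exact a2v (adj_addEdges_of_adj (addUniv_adj_of_mem hh h2v))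
        have hz1BN : z1 ∈ Set.range b ∨ z1 ∈ N := by
          by_cases hzr : z1 ∈ Set.range b
          · exact Or.inl hzr
          rcases h.cover z1 hzr with ((hz' | hz') | hz') | hz'
          · exact Or.inr hz'
          · exact absurd (adj_addEdges_of_adj (le_addUniv
              (lc_clique h hclean i.pos z1 (Or.inl hz') w hwLC h1w))) a1w
          · exact absurd hz' (Set.notMem_empty z1)
          · exact absurd (adj_addEdges_of_adj (le_addUniv
              (lc_clique h hclean i.pos z1 (Or.inr hz') w hwLC h1w))) a1w
        have hz2BN : z2 ∈ Set.range b ∨ z2 ∈ N := by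
          by_cases hzr : z2 ∈ Set.range b
          · exact Or.inl hzr
          rcases h.cover z2 hzr with ((hz' | hz') | hz') | hz'
          · exact Or.inr hz'
          · exact absurd (adj_addEdges_of_adj (le_addUniv
              (lc_clique h hclean i.pos z2 (Or.inl hz') v hvLC h2v))) a2v
          · exact absurd hz' (Set.notMem_empty z2)
          · exact absurd (adj_addEdges_of_adj (le_addUniv
              (lc_clique h hclean i.pos z2 (Or.inr hz') v hvLC h2v))) a2v
        have hblv : ¬ HU.Adj (b l) v := hlnon v hvLC i hiS hnGv
        have hz1bl : z1 ≠ b l := fun hh => hblv (hh ▸ a1v)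
        have hblz1 : HU.Adj (b l) z1 := hlBN z1 hz1BN hz1bl
        by_cases hGwl : G.Adj w (b l)
        · exact hOb.2.1 z1 v w (b l) ⟨a1v, hHUvw,
            adj_addEdges_of_adj (le_addUniv hGwl), hblz1,
            a1w, fun hh => hblv hh.symm, h1w, Ne.symm (hbLC l v hvLC)⟩
        · have hblw : ¬ HU.Adj (b l) w := huL w hwMs (fun hh => hGwl hh.symm)
          have hz2bl : z2 ≠ b l := fun hh => hblw (hh ▸ a2w)
          have hblz2 : HU.Adj (b l) z2 := hlBN z2 hz2BN hz2bl
          exact hOb.2.2 z1 v w z2 (b l) ⟨a1v, hHUvw, a2w.symm, hblz2.symm, hblz1,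
            a1w, hn12, fun hh => a2v hh.symm, fun hh => hblv hh.symm,
            fun hh => hblw hh.symm, h1w, h12, Ne.symm h2v,
            Ne.symm (hbLC l v hvLC), Ne.symm (hbLC l w hwLC)⟩
      set H2 : SimpleGraph V := mmSwap HU v w with hH2def
      have hOb2 : ObFree H2 := mmSwap_obFree hOb hHUvw halpha
      set F2 : Finset (Sym2 V) := Finset.univ.filter
        (fun e => e ∈ H2.edgeSet ∧ e ∉ GU.edgeSet) with hF2def
      have hmemF2 : ∀ e, e ∈ F2 ↔ (e ∈ H2.edgeSet ∧ e ∉ GU.edgeSet) := by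
        intro e
        rw [hF2def, Finset.mem_filter]
        simp
      have hGUH2 : ∀ {a c : V}, GU.Adj a c → H2.Adj a c := by
        intro a c hac
        by_cases hav : a = v
        · rw [hav] at hac ⊢
          by_cases hcw : c = w
          · rw [hcw] at hac ⊢
            exact mmSwap_adj_vw hvw_ne
          have hcv : c ≠ v := fun hh => GU.irrefl (hh ▸ hac)
          exact ((mmSwap_adj_v hvw_ne hcv hcw).mpr
            ⟨adj_addEdges_of_adj hac.symm,
             adj_addEdges_of_adj (hdom c hcv hcw hac.symm)⟩).symm
        by_cases haw : a = w
        · rw [haw] at hac ⊢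
          by_cases hcv : c = v
          · rw [hcv] at hac ⊢
            exact (mmSwap_adj_vw hvw_ne).symm
          have hcw : c ≠ w := fun hh => GU.irrefl (hh ▸ hac)
          exact ((mmSwap_adj_w hvw_ne hcv hcw).mpr
            (Or.inr (adj_addEdges_of_adj hac.symm))).symm
        by_cases hcv : c = v
        · rw [hcv] at hac ⊢
          exact (mmSwap_adj_v hvw_ne hav haw).mpr
            ⟨adj_addEdges_of_adj hac, adj_addEdges_of_adj (hdom a hav haw hac)⟩
        by_cases hcw : c = w
        · rw [hcw] at hac ⊢
          exact (mmSwap_adj_w hvw_ne hav haw).mpr (Or.inr (adj_addEdges_of_adj hac))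
        · exact (mmSwap_adj_out hav haw hcv hcw).mpr (adj_addEdges_of_adj hac)
      have haddEq : addEdges GU F2 = H2 := by
        ext a c
        rw [addEdges_adj]
        constructor
        · rintro (hh | ⟨hh, hne⟩)
          · exact hGUH2 hh
          · exact (SimpleGraph.mem_edgeSet _).mp ((hmemF2 _).mp hh).1
        · intro hh
          by_cases hGUac : GU.Adj a c
          · exact Or.inl hGUac
          · exact Or.inr ⟨(hmemF2 _).mpr ⟨(SimpleGraph.mem_edgeSet _).mpr hh,
              fun hcc => hGUac ((SimpleGraph.mem_edgeSet _).mp hcc)⟩, hh.ne⟩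
      have hF2new : ∀ e ∈ F2, e ∉ F → ∃ z, z ≠ v ∧ z ≠ w ∧ e = s(z, w) ∧
          s(z, v) ∈ F ∧ ¬ HU.Adj z w := by
        intro e he henF
        obtain ⟨heH2, heGU⟩ := (hmemF2 e).mp he
        induction e with
        | _ a c =>
          rw [SimpleGraph.mem_edgeSet _] at heH2
          have hnGUac : ¬ GU.Adj a c :=
            fun hh => heGU ((SimpleGraph.mem_edgeSet _).mpr hh)
          have hnHU : ∀ x y : V, s(x, y) = s(a, c) → ¬ HU.Adj x y := by
            intro x y hexy hxy
            rw [hHUdef, addEdges_adj] at hxy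
            rcases hxy with hxy | ⟨hxy, -⟩
            · exact heGU (hexy ▸ ((SimpleGraph.mem_edgeSet _).mpr hxy))
            · exact henF (hexy ▸ hxy)
          by_cases hav : a = v
          · rw [hav] at heH2 hnGUac hnHU ⊢
            by_cases hcw : c = w
            · rw [hcw] at hnGUac
              exact absurd (le_addUniv hGvw) hnGUac
            · exfalso
              have hcv : c ≠ v := fun hh => H2.irrefl (hh ▸ heH2)
              obtain ⟨hc1, hc2⟩ := (mmSwap_adj_v hvw_ne hcv hcw).mp heH2.symm
              exact hnHU c v (Sym2.eq_swap) hc1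
          by_cases hcv : c = v
          · rw [hcv] at heH2 hnGUac hnHU ⊢
            exfalso
            by_cases haw : a = w
            · rw [haw] at hnGUac
              exact hnGUac (le_addUniv hGvw.symm)
            · obtain ⟨hc1, hc2⟩ := (mmSwap_adj_v hvw_ne hav haw).mp heH2
              exact hnHU a v rfl hc1
          by_cases haw : a = w
          · rw [haw] at heH2 hnGUac hnHU ⊢
            have hcw : c ≠ w := fun hh => H2.irrefl (hh ▸ heH2)
            have hor := (mmSwap_adj_w hvw_ne hcv hcw).mp heH2.symm
            have hncw : ¬ HU.Adj c w := fun hh => hnHU c w Sym2.eq_swap hh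
            have hcv' : HU.Adj c v := hor.resolve_right hncw
            have hcvF : s(c, v) ∈ F := by
              rw [hHUdef, addEdges_adj] at hcv'
              rcases hcv' with hcc | ⟨hcc, -⟩
              · exact absurd ((hdom c hcv hcw hcc) : GU.Adj c w)
                  (fun hh => hnGUac hh.symm)
              · exact hcc
            exact ⟨c, hcv, hcw, Sym2.eq_swap, hcvF, hncw⟩
          by_cases hcw : c = w
          · rw [hcw] at heH2 hnGUac hnHU ⊢
            have hor := (mmSwap_adj_w hvw_ne hav haw).mp heH2
            have hnaw : ¬ HU.Adj a w := fun hh => hnHU a w rfl hh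
            have hav' : HU.Adj a v := hor.resolve_right hnaw
            have havF : s(a, v) ∈ F := by
              rw [hHUdef, addEdges_adj] at hav'
              rcases hav' with hcc | ⟨hcc, -⟩
              · exact absurd (hdom a hav haw hcc) (fun hh => hnGUac hh)
              · exact hcc
            exact ⟨a, hav, haw, rfl, havF, hnaw⟩
          · exact absurd ((mmSwap_adj_out hav haw hcv hcw).mp heH2)
              (fun hh => hnHU a c rfl hh)
      set phif : Sym2 V → Sym2 V := fun e =>
        if e ∈ F then e else Sym2.map (fun z => if z = w then v else z) e
        with hphif
      have hphi_id : ∀ e ∈ F, phif e = e := by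
        intro e he
        rw [hphif]
        simp [he]
      have hphi_moved : ∀ z : V, z ≠ w → s(z, w) ∉ F → phif s(z, w) = s(z, v) := by
        intro z hzw hnF
        rw [hphif]
        simp only [if_neg hnF, Sym2.map_pair_eq]
        rw [if_neg hzw]
        simp
      have hphi_mem : ∀ e ∈ F2, phif e ∈ F := by
        intro e he
        by_cases heF : e ∈ F
        · rw [hphi_id e heF]
          exact heF
        · obtain ⟨z, hzv, hzw, rfl, hzF, -⟩ := hF2new e he heF
          rw [hphi_moved z hzw heF]
          exact hzF
      have hphi_inj : Set.InjOn phif ↑F2 := by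
        intro e1 he1 e2 he2 heq
        have he1' : e1 ∈ F2 := he1
        have he2' : e2 ∈ F2 := he2
        by_cases h1F : e1 ∈ F <;> by_cases h2F : e2 ∈ F
        · rw [hphi_id e1 h1F, hphi_id e2 h2F] at heq
          exact heq
        · obtain ⟨z2, h2v, h2w, he2eq, h2F', h2nw⟩ := hF2new e2 he2' h2F
          exfalso
          rw [hphi_id e1 h1F, he2eq, hphi_moved z2 h2w (he2eq ▸ h2F)] at heq
          have hmem : s(z2, v) ∈ F2 := heq ▸ he1'
          have hadj : H2.Adj z2 v :=
            (SimpleGraph.mem_edgeSet _).mp ((hmemF2 _).mp hmem).1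
          exact h2nw ((mmSwap_adj_v hvw_ne h2v h2w).mp hadj).2
        · obtain ⟨z1, h1v, h1w, he1eq, h1F', h1nw⟩ := hF2new e1 he1' h1F
          exfalso
          rw [hphi_id e2 h2F, he1eq, hphi_moved z1 h1w (he1eq ▸ h1F)] at heq
          have hmem : s(z1, v) ∈ F2 := heq ▸ he2'
          have hadj : H2.Adj z1 v :=
            (SimpleGraph.mem_edgeSet _).mp ((hmemF2 _).mp hmem).1
          exact h1nw ((mmSwap_adj_v hvw_ne h1v h1w).mp hadj).2
        · obtain ⟨z1, h1v, h1w, he1eq, -, -⟩ := hF2new e1 he1' h1F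
          obtain ⟨z2, h2v, h2w, he2eq, -, -⟩ := hF2new e2 he2' h2F
          rw [he1eq, he2eq, hphi_moved z1 h1w (he1eq ▸ h1F),
            hphi_moved z2 h2w (he2eq ▸ h2F)] at heq
          rw [he1eq, he2eq]
          rcases Sym2.eq_iff.mp heq with ⟨rfl, -⟩ | ⟨hx1, hx2⟩
          · rfl
          · exact absurd hx1 h1v
      have hcard2 : F2.card ≤ k :=
        le_trans (Finset.card_le_card_of_injOn phif hphi_mem hphi_inj) hcard
      have hdiag2 : ∀ e ∈ F2, ¬ e.IsDiag := fun e he =>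
        SimpleGraph.not_isDiag_of_mem_edgeSet _ ((hmemF2 e).mp he).1
      have hedge2 : ∀ e ∈ F2, e ∉ GU.edgeSet := fun e he => ((hmemF2 e).mp he).2
      have hOb2' : ObFree (addEdges GU F2) := by
        rw [haddEq]
        exact hOb2
      have htwlt : tw v < tw w := by
        have hsub : (Finset.univ.filter (fun j : Fin p => G.Adj v (b j))) ⊆
            (Finset.univ.filter (fun j : Fin p => G.Adj w (b j))) := by
          intro j hj
          have hjv : G.Adj v (b j) := (Finset.mem_filter.mp hj).2
          have hvL' : v ∈ L := hnbrL j v hvLC hjv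
          have hji : j ≤ i := by
            by_contra hc
            push_neg at hc
            exact hnGv (l_prefix h v hvL' i j (le_of_lt hc) hjv).symm
          exact Finset.mem_filter.mpr ⟨Finset.mem_univ _,
            l_prefix h w hwL j i hji hGmw.symm⟩
        exact Finset.card_lt_card ((Finset.ssubset_iff_of_subset hsub).mpr
          ⟨i, Finset.mem_filter.mpr ⟨Finset.mem_univ _, hGmw.symm⟩,
           fun hh => hnGv ((Finset.mem_filter.mp hh).2).symm⟩)
      have hestarF2 : s(u, w) ∈ F2 := by
        apply (hmemF2 _).mpr
        constructor
        · rw [SimpleGraph.mem_edgeSet _]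
          exact (mmSwap_adj_w hvw_ne huv_ne hune_w).mpr
            (Or.inl ((T1 huMs hvMs).mpr e2))
        · intro hh
          rw [SimpleGraph.mem_edgeSet _, hGUdef,
            addUniv_adj_of_not_mem huMs hwMs] at hh
          exact hnGuw hh
      have hestarnF : s(u, w) ∉ F := by
        intro hh
        apply n2
        rw [hHdef, addEdges_adj]
        exact Or.inr ⟨hh, hune_w⟩
      have hwtlt : ∀ z : V, wt s(z, w) < wt s(z, v) := by
        intro z
        rw [hwtmk z w, hwtmk z v]
        have h1 := htwle w
        omega
      have hPhi2 : Phi F2 < Phi F := by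
        have hstep : F2.sum wt < F2.sum (fun e => wt (phif e)) := by
          apply Finset.sum_lt_sum
          · intro e he
            by_cases heF : e ∈ F
            · rw [hphi_id e heF]
            · obtain ⟨z, hzv, hzw, rfl, -, -⟩ := hF2new e he heF
              rw [hphi_moved z hzw heF]
              exact le_of_lt (hwtlt z)
          · refine ⟨s(u, w), hestarF2, ?_⟩
            rw [hphi_moved u hune_w hestarnF]
            exact hwtlt u
        have himg : F2.sum (fun e => wt (phif e)) = (F2.image phif).sum wt :=
          (Finset.sum_image (fun x hx y hy hxy =>
            hphi_inj (Finset.mem_coe.mpr hx) (Finset.mem_coe.mpr hy) hxy)).symm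
        have hsub2 : F2.image phif ⊆ F := by
          intro e he
          obtain ⟨e0, he0, rfl⟩ := Finset.mem_image.mp he
          exact hphi_mem e0 he0
        calc Phi F2 = F2.sum wt := rfl
        _ < F2.sum (fun e => wt (phif e)) := hstep
        _ = (F2.image phif).sum wt := himg
        _ ≤ F.sum wt := Finset.sum_le_sum_of_subset hsub2
        _ = Phi F := rfl
      exact ih (Phi F2) (by omega) F2 le_rfl hdiag2 hedge2 hcard2 hOb2'
    obtain ⟨hvLC, hnGv⟩ := hvfacts u0 v0 w0 h4
    obtain ⟨e1, e2, e3, e4, n1, n2, dd1, dd2⟩ := id h4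
    have hGmu : G.Adj (b i) u0 := (T2 _ hm u0).mp e1
    have hGmw : G.Adj (b i) w0 := (T2 _ hm w0).mp e4.symm
    rcases hty i u0 hGmu with huBN | huLC
    · rcases hty i w0 hGmw with hwBN | hwLC
      · exfalso
        have hnGuw : ¬ G.Adj u0 w0 := fun hh => n2 (adj_addEdges_of_adj hh)
        rcases huBN with ⟨j, rfl⟩ | huN
        · rcases hwBN with ⟨j', rfl⟩ | hwN
          · exact hnGuw (h.clique j j' (fun hh => dd2 (congrArg b hh)))
          · exact hnGuw (h.nAdj w0 hwN j).symm
        · rcases hwBN with ⟨j', rfl⟩ | hwN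
          · exact hnGuw (h.nAdj u0 huN j')
          · have hu0Ms := hN_Ms u0 huN
            have hw0Ms := hN_Ms w0 hwN
            have hv0Ms := hLC_Ms v0 hvLC
            exact hOb.2.1 (b l) u0 v0 w0
              ⟨hlBN u0 (Or.inr huN) (fun hh => (hbN l u0 huN) hh.symm),
              (T1 hu0Ms hv0Ms).mpr e2, (T1 hv0Ms hw0Ms).mpr e3,
              ((hlBN w0 (Or.inr hwN) (fun hh => (hbN l w0 hwN) hh.symm))).symm,
              hlnon v0 hvLC i hiS hnGv, fun hh => n2 ((T1 hu0Ms hw0Ms).mp hh),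
              hbLC l v0 hvLC, dd2⟩
      · exact main u0 v0 w0 h4 hwLC huBN
    · rcases hty i w0 hGmw with hwBN | hwLC
      · exact main w0 v0 u0 h4.reflect huLC hwBN
      · exfalso
        exact n2 (adj_addEdges_of_adj
          (lc_clique h hclean i.pos u0 huLC w0 hwLC dd2))
  · have hObH : ObFree H := by
      refine ⟨?_, ?_, ?_⟩
      · have D : ∀ (i : Fin p), i ∈ S → ∀ y z : V, IsInd3 H (b i) y z → False := by
          rintro i hiS y z ⟨dd1, dd2, dd3, nn1, nn2, nn3⟩
          have hyLC : y ∈ L ∪ C := hnonNbrLC i y (Ne.symm dd1)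
            (fun hh => nn1 (adj_addEdges_of_adj hh))
          have hzLC : z ∈ L ∪ C := hnonNbrLC i z (Ne.symm dd2)
            (fun hh => nn2 (adj_addEdges_of_adj hh))
          exact nn3 (adj_addEdges_of_adj (lc_clique h hclean i.pos y hyLC z hzLC dd3))
        rintro x y z h3
        by_cases hx : x ∈ Ms
        · obtain ⟨i, hiS, rfl⟩ := hx
          exact D i hiS y z h3
        by_cases hy : y ∈ Ms
        · obtain ⟨i, hiS, rfl⟩ := hy
          exact D i hiS x z h3.perm12
        by_cases hz : z ∈ Ms
        · obtain ⟨i, hiS, rfl⟩ := hz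
          exact D i hiS y x h3.perm13
        obtain ⟨dd1, dd2, dd3, nn1, nn2, nn3⟩ := id h3
        exact hOb.1 x y z ⟨dd1, dd2, dd3, fun hh => nn1 ((T1 hx hy).mp hh),
          fun hh => nn2 ((T1 hx hz).mp hh), fun hh => nn3 ((T1 hy hz).mp hh)⟩
      · have D : ∀ (i : Fin p), i ∈ S → ∀ u v w : V,
            IsInducedC4 H (b i) u v w → False :=
          fun i hiS u v w h4 => hbad ⟨i, u, v, w, hiS, h4⟩
        rintro a b' c d h4
        by_cases hax : a ∈ Ms
        · obtain ⟨i, hiS, rfl⟩ := hax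
          exact D i hiS b' c d h4
        by_cases hbx : b' ∈ Ms
        · obtain ⟨i, hiS, rfl⟩ := hbx
          exact D i hiS c d a h4.rotate
        by_cases hcx : c ∈ Ms
        · obtain ⟨i, hiS, rfl⟩ := hcx
          exact D i hiS d a b' h4.rotate.rotate
        by_cases hdx : d ∈ Ms
        · obtain ⟨i, hiS, rfl⟩ := hdx
          exact D i hiS a b' c h4.rotate.rotate.rotate
        obtain ⟨e1, e2, e3, e4, n1, n2, dd1, dd2⟩ := id h4
        exact hOb.2.1 a b' c d ⟨(T1 hax hbx).mpr e1, (T1 hbx hcx).mpr e2,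
          (T1 hcx hdx).mpr e3, (T1 hdx hax).mpr e4,
          fun hh => n1 ((T1 hax hcx).mp hh), fun hh => n2 ((T1 hbx hdx).mp hh),
          dd1, dd2⟩
      · have D5 : ∀ (i : Fin p), i ∈ S → ∀ c1 c2 c3 c4 : V,
            IsC5 H (b i) c1 c2 c3 c4 → False := by
          intro i hiS c1 c2 c3 c4 h5
          have hm : b i ∈ Ms := (hmemMs i).mpr hiS
          have build : ∀ z1 z2 z3 z4 : V, IsC5 H (b i) z1 z2 z3 z4 →
              z2 ∈ L ∪ C → z4 ∈ L ∪ C → False := by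
            rintro z1 z2 z3 z4 ⟨f1, f2, f3, f4, f5, m1, m2, m3, m4, m5,
              g1, g2, g3, g4, g5⟩ h2LC h4LC
            exact hbad ⟨i, z1, z2, z4, hiS, ⟨f1, f2,
              adj_addEdges_of_adj (lc_clique h hclean i.pos z2 h2LC z4 h4LC g5),
              f5, m1, m4, g1, g4⟩⟩
          obtain ⟨f1, f2, f3, f4, f5, m1, m2, m3, m4, m5, g1, g2, g3, g4, g5⟩ := id h5
          have hGmc1 : G.Adj (b i) c1 := (T2 _ hm c1).mp f1
          have hGmc4 : G.Adj (b i) c4 := (T2 _ hm c4).mp f5.symm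
          have hnGm2 : ¬ G.Adj (b i) c2 := fun hh => m1 (adj_addEdges_of_adj hh)
          have hnGm3 : ¬ G.Adj (b i) c3 := fun hh => m2 (adj_addEdges_of_adj hh)
          have h2LC : c2 ∈ L ∪ C := hnonNbrLC i c2 (Ne.symm g1) hnGm2
          have h3LC : c3 ∈ L ∪ C := hnonNbrLC i c3 (Ne.symm g2) hnGm3
          have hnGc14 : ¬ G.Adj c1 c4 := fun hh => m4 (adj_addEdges_of_adj hh)
          rcases hty i c4 hGmc4 with h4BN | h4LC
          · rcases hty i c1 hGmc1 with h1BN | h1LC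
            · rcases h1BN with ⟨j, rfl⟩ | h1N
              · rcases h4BN with ⟨j', rfl⟩ | h4N
                · exact hnGc14 (h.clique j j' (fun hh => g4 (congrArg b hh)))
                · exact hnGc14 (h.nAdj c4 h4N j).symm
              · rcases h4BN with ⟨j', rfl⟩ | h4N
                · exact hnGc14 (h.nAdj c1 h1N j')
                · have h1Ms := hN_Ms c1 h1N
                  have h4Ms := hN_Ms c4 h4N
                  have h2Ms := hLC_Ms c2 h2LC
                  have h3Ms := hLC_Ms c3 h3LC
                  exact hOb.2.2 (b l) c1 c2 c3 c4 ⟨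
                    hlBN c1 (Or.inr h1N) (fun hh => (hbN l c1 h1N) hh.symm),
                    (T1 h1Ms h2Ms).mpr f2, (T1 h2Ms h3Ms).mpr f3,
                    (T1 h3Ms h4Ms).mpr f4,
                    (hlBN c4 (Or.inr h4N) (fun hh => (hbN l c4 h4N) hh.symm)).symm,
                    hlnon c2 h2LC i hiS hnGm2, hlnon c3 h3LC i hiS hnGm3,
                    fun hh => m3 ((T1 h1Ms h3Ms).mp hh),
                    fun hh => m4 ((T1 h1Ms h4Ms).mp hh),
                    fun hh => m5 ((T1 h2Ms h4Ms).mp hh),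
                    hbLC l c2 h2LC, hbLC l c3 h3LC, g3, g4, g5⟩
            · exact build c4 c3 c2 c1 h5.reflect h3LC h1LC
          · exact build c1 c2 c3 c4 h5 h2LC h4LC
        rintro a b' c d e h5
        by_cases hax : a ∈ Ms
        · obtain ⟨i, hiS, rfl⟩ := hax
          exact D5 i hiS b' c d e h5
        by_cases hbx : b' ∈ Ms
        · obtain ⟨i, hiS, rfl⟩ := hbx
          exact D5 i hiS c d e a h5.rotate
        by_cases hcx : c ∈ Ms
        · obtain ⟨i, hiS, rfl⟩ := hcx
          exact D5 i hiS d e a b' h5.rotate.rotate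
        by_cases hdx : d ∈ Ms
        · obtain ⟨i, hiS, rfl⟩ := hdx
          exact D5 i hiS e a b' c h5.rotate.rotate.rotate
        by_cases hex : e ∈ Ms
        · obtain ⟨i, hiS, rfl⟩ := hex
          exact D5 i hiS a b' c d h5.rotate.rotate.rotate.rotate
        obtain ⟨f1, f2, f3, f4, f5, m1, m2, m3, m4, m5, g1, g2, g3, g4, g5⟩ := id h5
        exact hOb.2.2 a b' c d e ⟨(T1 hax hbx).mpr f1, (T1 hbx hcx).mpr f2,
          (T1 hcx hdx).mpr f3, (T1 hdx hex).mpr f4, (T1 hex hax).mpr f5,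
          fun hh => m1 ((T1 hax hcx).mp hh), fun hh => m2 ((T1 hax hdx).mp hh),
          fun hh => m3 ((T1 hbx hdx).mp hh), fun hh => m4 ((T1 hbx hex).mp hh),
          fun hh => m5 ((T1 hcx hex).mp hh), g1, g2, g3, g4, g5⟩
    refine ⟨F, hdiag, ?_, hcard, bicliqueChain_of_obFree hObH⟩
    intro e he hmem
    apply hedge e he
    exact SimpleGraph.edgeSet_mono le_addUniv hmem

end BackwardCore


/-- Simple K-join rule for bi-clique chain completion: removing the middle of
a bcc-clean simple `K`-join with at least `2(k + 1)` vertices (keeping its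
`k + 1` first and `k + 1` last vertices) preserves the existence of a
bcc-`k`-completion. -/
theorem bcc_simple_kjoin_rule_safe [Fintype V] (G : SimpleGraph V) (k p : ℕ)
    (b : Fin p → V) (N L R C : Set V)
    (h : KJoinWith G b N L R C) (hsimple : L = ∅ ∨ R = ∅)
    (hclean : ∀ i : Fin p, ¬ InInd3 G (b i) ∧ ¬ InC4 G (b i))
    (hp : 2 * (k + 1) ≤ p) :
    (∃ F : Finset (Sym2 V), IsBccKCompletion G k F) ↔
      (∃ F, IsBccKCompletion
        (G.induce {v : V |
          v ∉ b '' {i : Fin p | k + 1 ≤ i.val ∧ i.val + k + 2 ≤ p}}) k F) := by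
  classical
  constructor
  · intro hL
    exact completion_induce_of_addUniv (forward_to_addUniv hL)
  · intro hR
    have hU := completion_addUniv_of_induce hR
    rcases hsimple with hLe | hRe
    · subst hLe
      have hrevS : Fin.rev '' {i : Fin p | k + 1 ≤ i.val ∧ i.val + k + 2 ≤ p} =
          {i : Fin p | k + 1 ≤ i.val ∧ i.val + k + 2 ≤ p} := by
        ext i
        simp only [Set.mem_image, Set.mem_setOf_eq]
        constructor
        · rintro ⟨j, ⟨hj1, hj2⟩, rfl⟩
          have hjl := j.isLt
          refine ⟨?_, ?_⟩ <;> (rw [Fin.val_rev]; omega)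
        · rintro ⟨h1, h2⟩
          have hil := i.isLt
          refine ⟨Fin.rev i, ⟨?_, ?_⟩, Fin.rev_rev i⟩ <;> (rw [Fin.val_rev]; omega)
      have himg : (b ∘ Fin.rev) '' {i : Fin p | k + 1 ≤ i.val ∧ i.val + k + 2 ≤ p} =
          b '' {i : Fin p | k + 1 ≤ i.val ∧ i.val + k + 2 ≤ p} := by
        rw [Set.image_comp, hrevS]
      rw [← himg] at hU
      exact backward_core G k p (b ∘ Fin.rev) N R C h.reverse
        (fun i => hclean (Fin.rev i)) hp hU
    · subst hRe
      exact backward_core G k p b N L C h hclean hp hU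
end

section
/- Let G = (V,E) be a finite simple graph admitting a bcc-k-completion, and suppose every simple K-join of G has at most 3k^2 + 6k + 2 vertices. Then |V| ≤ 2(3k^2 + 6k + 2) + 2k; in particular G has O(k^2) vertices. -/
open SimpleGraph Finset

variable {V : Type*}

/-! ### Auxiliary lemmas -/

/-- A down-closed subset of `Fin q` is an initial segment. -/
lemma downclosed_iff {q : ℕ} (D : Finset (Fin q))
    (h : ∀ i j : Fin q, i ≤ j → j ∈ D → i ∈ D) (i : Fin q) :
    i ∈ D ↔ i.val < D.card := by
  constructor
  · intro hi
    have hsub : Finset.Iic i ⊆ D := fun j hj => h j i (Finset.mem_Iic.mp hj) hi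
    have := Finset.card_le_card hsub
    rw [Fin.card_Iic] at this
    omega
  · intro hi
    by_contra hni
    have hsub : D ⊆ Finset.Iio i := by
      intro j hj
      rw [Finset.mem_Iio]
      by_contra hij
      exact hni (h i j (le_of_not_gt hij) hj)
    have := Finset.card_le_card hsub
    rw [Fin.card_Iio] at this
    omega

lemma aux_mul_le {a a' e e' n : ℕ} (he : e < n) (h : a * n + e ≤ a' * n + e') :
    e' < n → a ≤ a' := by
  intro he'
  by_contra h'
  push_neg at h'
  have h2 : (a' + 1) * n ≤ a * n := Nat.mul_le_mul_right n h'
  rw [add_mul, one_mul] at h2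
  omega

/-- Build a simple K-join from an enumeration of a clique all of whose outside
partial neighborhoods are suffixes. -/
lemma mk_simple_kjoin {V : Type*} (G : SimpleGraph V) {p : ℕ} (b : Fin p → V)
    (hinj : Function.Injective b)
    (hclique : ∀ i j : Fin p, i ≠ j → G.Adj (b i) (b j))
    (hmono : ∀ v, v ∉ Set.range b → ∀ i j : Fin p, i ≤ j →
      G.Adj v (b i) → G.Adj v (b j)) :
    IsSimpleKJoin G (Set.range b) := by
  classical
  set N : Set V := {v | v ∉ Set.range b ∧ ∀ i, G.Adj v (b i)} with hN
  set C : Set V := {v | v ∉ Set.range b ∧ v ∉ N ∧ ∀ i, ¬ G.Adj v (b i)} with hC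
  set R : Set V := {v | v ∉ Set.range b ∧ v ∉ N ∧ v ∉ C} with hR
  have hRadj : ∀ v ∈ R, ∃ i, G.Adj v (b i) := by
    intro v hv
    by_contra hcon
    push_neg at hcon
    exact hv.2.2 ⟨hv.1, hv.2.1, hcon⟩
  have hRnot : ∀ v ∈ R, ∃ i, ¬ G.Adj v (b i) := by
    intro v hv
    by_contra hcon
    push_neg at hcon
    exact hv.2.1 ⟨hv.1, hcon⟩
  refine ⟨p, b, N, ∅, R, C, rfl, ?_, Or.inl rfl⟩
  refine ⟨hinj, hclique, ?_, ?_, ?_, ?_, ?_, ?_, ?_, ?_, ?_, ?_⟩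
  · -- cover
    intro v hv
    simp only [Set.mem_union]
    by_cases h1 : ∀ i, G.Adj v (b i)
    · exact Or.inl (Or.inl (Or.inl ⟨hv, h1⟩))
    · by_cases h2 : v ∈ C
      · exact Or.inr h2
      · refine Or.inl (Or.inr ⟨hv, fun hvN => h1 hvN.2, h2⟩)
  · -- disj
    refine List.pairwise_cons.mpr ⟨?_, List.pairwise_cons.mpr ⟨?_,
      List.pairwise_cons.mpr ⟨?_, List.pairwise_cons.mpr ⟨?_,
      List.pairwise_singleton _ _⟩⟩⟩⟩
    · intro s hs
      simp only [List.mem_cons, List.mem_singleton, List.not_mem_nil, or_false] at hs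
      rcases hs with rfl | rfl | rfl | rfl
      · exact Set.disjoint_left.mpr fun v hv h => (h : v ∈ N).1 hv
      · exact Set.disjoint_left.mpr fun v hv h => absurd h (Set.notMem_empty v)
      · exact Set.disjoint_left.mpr fun v hv h => (h : v ∈ R).1 hv
      · exact Set.disjoint_left.mpr fun v hv h => (h : v ∈ C).1 hv
    · intro s hs
      simp only [List.mem_cons, List.mem_singleton, List.not_mem_nil, or_false] at hs
      rcases hs with rfl | rfl | rfl
      · exact Set.disjoint_left.mpr fun v hv h => absurd h (Set.notMem_empty v)
      · exact Set.disjoint_left.mpr fun v hv h => (h : v ∈ R).2.1 hv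
      · exact Set.disjoint_left.mpr fun v hv h => (h : v ∈ C).2.1 hv
    · intro s hs
      simp only [List.mem_cons, List.mem_singleton, List.not_mem_nil, or_false] at hs
      rcases hs with rfl | rfl
      · exact Set.disjoint_left.mpr fun v hv h => absurd hv (Set.notMem_empty v)
      · exact Set.disjoint_left.mpr fun v hv h => absurd hv (Set.notMem_empty v)
    · intro s hs
      simp only [List.mem_singleton] at hs
      subst hs
      exact Set.disjoint_left.mpr fun v hv h => (hv : v ∈ R).2.2 h
  · exact fun v hv i => hv.2 i
  · exact fun v hv i => hv.2.2 i
  · intro v hv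
    rcases hv with hv | hv
    · exact absurd hv (Set.notMem_empty v)
    · exact hRadj v hv
  · intro v hv
    rcases hv with hv | hv
    · exact absurd hv (Set.notMem_empty v)
    · exact hRnot v hv
  · -- rFirst
    intro r hr i hi hadj
    obtain ⟨m, hm⟩ := hRnot r hr
    exact hm (hmono r hr.1 i m (by rw [Fin.le_def]; omega) hadj)
  · -- lLast
    intro v hv
    exact absurd hv (Set.notMem_empty v)
  · -- rMono
    intro i j hij r hr hadj
    exact (hmono r hr.1 i j (by rw [Fin.le_def]; omega) hadj.symm).symm
  · -- lMono
    exact fun i j _ x hx => absurd hx (Set.notMem_empty x)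

/-- Kernel size for bi-clique chain completion: a positive instance whose
simple `K`-joins have at most `3k² + 6k + 2` vertices has at most
`2(3k² + 6k + 2) + 2k = O(k²)` vertices. -/
theorem bcc_kernel_size [Fintype V] (G : SimpleGraph V) (k : ℕ)
    (hpos : ∃ F : Finset (Sym2 V), IsBccKCompletion G k F)
    (hKJ : ∀ B : Set V, IsSimpleKJoin G B → B.ncard ≤ 3 * k ^ 2 + 6 * k + 2) :
    Fintype.card V ≤ 2 * (3 * k ^ 2 + 6 * k + 2) + 2 * k := by
  classical
  obtain ⟨F, hdiag, hnotE, hFcard, q, x, Y, hxinj, hdXY, hcov, hX, hY, hmXY⟩ := hpos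
  set M := 3 * k ^ 2 + 6 * k + 2 with hM
  set H := addEdges G F with hHdef
  -- the set of endpoints of F
  set S : Finset V := F.biUnion (fun e => {(Quot.out e).1, (Quot.out e).2}) with hSdef
  have hSmem : ∀ v : V, v ∈ S ↔ ∃ e ∈ F, v ∈ e := by
    intro v
    simp only [hSdef, Finset.mem_biUnion, Finset.mem_insert, Finset.mem_singleton]
    refine exists_congr fun e => and_congr_right fun _ => ?_
    have he : e = s((Quot.out e).1, (Quot.out e).2) := by
      exact (Quot.out_eq e).symm
    conv_rhs => rw [he]
    rw [Sym2.mem_iff]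
  have hScard : S.card ≤ 2 * k := by
    calc S.card ≤ ∑ e ∈ F, ({(Quot.out e).1, (Quot.out e).2} : Finset V).card :=
          Finset.card_biUnion_le
      _ ≤ ∑ _e ∈ F, 2 := Finset.sum_le_sum fun e _ =>
          (Finset.card_insert_le _ _).trans (by simp)
      _ = 2 * F.card := by rw [Finset.sum_const, smul_eq_mul, Nat.mul_comm]
      _ ≤ 2 * k := Nat.mul_le_mul_left 2 hFcard
  have hGH : ∀ u v : V, v ∉ S → (G.Adj u v ↔ H.Adj u v) := by
    intro u v hv
    rw [hHdef]
    simp only [addEdges, SimpleGraph.sup_adj, SimpleGraph.fromEdgeSet_adj]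
    constructor
    · exact fun h => Or.inl h
    · rintro (h | ⟨hmem, hne⟩)
      · exact h
      · exact absurd ((hSmem v).mpr ⟨s(u, v), by exact_mod_cast hmem,
          Sym2.mem_iff.mpr (Or.inr rfl)⟩) hv
  rcases Nat.eq_zero_or_pos (Fintype.card V) with hn | hn
  · rw [hn]; exact Nat.zero_le _
  set n := Fintype.card V with hndef
  set eV := Fintype.equivFin V with heV
  -- ### the K-join X \ S
  set T : Finset (Fin q) := Finset.univ.filter (fun i => x i ∉ S) with hT
  set σ := T.orderIsoOfFin rfl with hσ
  set b₁ : Fin T.card → V := fun i => x ↑(σ i) with hb₁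
  have hb₁T : ∀ i, (↑(σ i) : Fin q) ∈ T := fun i => (σ i).2
  have hb₁S : ∀ i, b₁ i ∉ S := fun i => (Finset.mem_filter.mp (hb₁T i)).2
  have hb₁inj : Function.Injective b₁ := by
    intro i j h
    exact σ.injective (Subtype.ext (hxinj h))
  have hb₁clique : ∀ i j, i ≠ j → G.Adj (b₁ i) (b₁ j) := by
    intro i j hij
    have hne : (↑(σ i) : Fin q) ≠ ↑(σ j) := by
      intro h
      exact hij (σ.injective (Subtype.ext h))
    exact (hGH (b₁ i) (b₁ j) (hb₁S j)).mpr (hX _ _ hne)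
  have hb₁mono : ∀ v, v ∉ Set.range b₁ → ∀ i j, i ≤ j →
      G.Adj v (b₁ i) → G.Adj v (b₁ j) := by
    intro v hv i j hij hadj
    rcases hcov v with ⟨t, ht⟩ | hvY
    · have hne : t ≠ ↑(σ j) := by
        intro h
        exact hv ⟨j, by rw [hb₁]; simp only [← h, ht]⟩
      have := hX t (σ j) hne
      rw [ht] at this
      exact (hGH v _ (hb₁S j)).mpr this
    · have h1 : H.Adj (x ↑(σ i)) v := ((hGH v _ (hb₁S i)).mp hadj).symm
      have hle : (↑(σ i) : Fin q) ≤ ↑(σ j) := σ.monotone hij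
      have h3 : H.Adj (x ↑(σ j)) v := hmXY _ _ hle v hvY h1
      exact (hGH v _ (hb₁S j)).mpr h3.symm
  have hKJ₁ : (Set.range b₁).ncard ≤ M :=
    hKJ _ (mk_simple_kjoin G b₁ hb₁inj hb₁clique hb₁mono)
  -- ### the K-join Y \ S
  set Bf : Finset V := Finset.univ.filter (fun v => v ∈ Y ∧ v ∉ S) with hBf
  set ρ : V → ℕ := fun y => (Finset.univ.filter fun i : Fin q => ¬ H.Adj (x i) y).card
    with hρ
  have hρle : ∀ y, ρ y ≤ q := fun y => (Finset.card_filter_le _ _).trans (by simp)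
  have hadjρ : ∀ (t : Fin q) (y : V), y ∈ Y → (H.Adj (x t) y ↔ ρ y ≤ t.val) := by
    intro t y hy
    simp only [hρ]
    have hdc : ∀ i j : Fin q, i ≤ j →
        j ∈ (Finset.univ.filter fun i : Fin q => ¬ H.Adj (x i) y) →
        i ∈ (Finset.univ.filter fun i : Fin q => ¬ H.Adj (x i) y) := by
      intro i j hij hjmem
      rw [Finset.mem_filter] at hjmem ⊢
      exact ⟨Finset.mem_univ _, fun hadj => hjmem.2 (hmXY i j hij y hy hadj)⟩
    have hiff := downclosed_iff _ hdc t
    rw [Finset.mem_filter] at hiff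
    constructor
    · intro hadj
      by_contra hc
      exact (hiff.mpr (by omega)).2 hadj
    · intro h
      by_contra hna
      have := hiff.mp ⟨Finset.mem_univ _, hna⟩
      omega
  set key : V → ℕ := fun y => (q - ρ y) * n + (eV y).val with hkey
  have hkeymod : ∀ y, key y % n = (eV y).val := by
    intro y
    rw [hkey]
    simp only []
    rw [Nat.add_comm, Nat.add_mul_mod_self_right, Nat.mod_eq_of_lt (eV y).isLt]
  have hkeyinj : Function.Injective key := by
    intro y y' h
    have h2 : (eV y).val = (eV y').val := by
      rw [← hkeymod y, ← hkeymod y', h]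
    exact eV.injective (Fin.ext h2)
  set K : Finset ℕ := Bf.image key with hK
  have hKcard : K.card = Bf.card := Finset.card_image_of_injective _ hkeyinj
  set emb := K.orderEmbOfFin hKcard with hemb
  set b₂ : Fin Bf.card → V := fun i => eV.symm ⟨emb i % n, Nat.mod_lt _ hn⟩ with hb₂
  have hb₂spec : ∀ i, b₂ i ∈ Bf ∧ key (b₂ i) = emb i := by
    intro i
    have hmem : emb i ∈ K := Finset.orderEmbOfFin_mem _ _ _
    obtain ⟨y, hy, hky⟩ := Finset.mem_image.mp hmem
    have hb : b₂ i = y := by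
      rw [hb₂]
      simp only [← hky, hkeymod y]
      simp
    rw [hb]
    exact ⟨hy, hky⟩
  have hb₂Y : ∀ i, b₂ i ∈ Y := fun i =>
    (Finset.mem_filter.mp (hb₂spec i).1).2.1
  have hb₂S : ∀ i, b₂ i ∉ S := fun i =>
    (Finset.mem_filter.mp (hb₂spec i).1).2.2
  have hb₂inj : Function.Injective b₂ := by
    intro i j h
    have : emb i = emb j := by
      rw [← (hb₂spec i).2, ← (hb₂spec j).2, h]
    exact emb.injective this
  have hrange₂ : Set.range b₂ = ↑Bf := by
    ext v
    constructor
    · rintro ⟨i, rfl⟩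
      exact (hb₂spec i).1
    · intro hv
      have hmem : key v ∈ Set.range (emb : Fin Bf.card → ℕ) := by
        rw [hemb, Finset.range_orderEmbOfFin]
        exact Finset.mem_coe.mpr (Finset.mem_image_of_mem _ hv)
      obtain ⟨i, hi⟩ := hmem
      refine ⟨i, ?_⟩
      rw [hb₂]
      simp only [hi, hkeymod v]
      simp
  have hρanti : ∀ i j : Fin Bf.card, i ≤ j → ρ (b₂ j) ≤ ρ (b₂ i) := by
    intro i j hij
    have h1 : key (b₂ i) ≤ key (b₂ j) := by
      rw [(hb₂spec i).2, (hb₂spec j).2]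
      exact emb.monotone hij
    rw [hkey] at h1
    have h2 : q - ρ (b₂ i) ≤ q - ρ (b₂ j) :=
      aux_mul_le (eV (b₂ i)).isLt h1 (eV (b₂ j)).isLt
    have := hρle (b₂ i)
    have := hρle (b₂ j)
    omega
  have hb₂clique : ∀ i j, i ≠ j → G.Adj (b₂ i) (b₂ j) := by
    intro i j hij
    have hne : b₂ i ≠ b₂ j := fun h => hij (hb₂inj h)
    exact (hGH (b₂ i) (b₂ j) (hb₂S j)).mpr (hY (hb₂Y i) (hb₂Y j) hne)
  have hb₂mono : ∀ v, v ∉ Set.range b₂ → ∀ i j, i ≤ j →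
      G.Adj v (b₂ i) → G.Adj v (b₂ j) := by
    intro v hv i j hij hadj
    rcases hcov v with ⟨t, ht⟩ | hvY
    · have h1 : H.Adj (x t) (b₂ i) := by
        rw [ht]
        exact (hGH v _ (hb₂S i)).mp hadj
      have h2 : ρ (b₂ i) ≤ t.val := (hadjρ t _ (hb₂Y i)).mp h1
      have h4 : H.Adj (x t) (b₂ j) :=
        (hadjρ t _ (hb₂Y j)).mpr (le_trans (hρanti i j hij) h2)
      rw [ht] at h4
      exact (hGH v _ (hb₂S j)).mpr h4
    · have hne : v ≠ b₂ j := fun h => hv ⟨j, h.symm⟩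
      exact (hGH v _ (hb₂S j)).mpr (hY hvY (hb₂Y j) hne)
  have hKJ₂ : (Set.range b₂).ncard ≤ M :=
    hKJ _ (mk_simple_kjoin G b₂ hb₂inj hb₂clique hb₂mono)
  -- ### counting
  set F₁ : Finset V := Finset.univ.filter (fun v => v ∈ Set.range x ∧ v ∉ S) with hF₁
  have hrange₁ : Set.range b₁ = ↑F₁ := by
    ext v
    constructor
    · rintro ⟨i, rfl⟩
      exact Finset.mem_filter.mpr ⟨Finset.mem_univ _, ⟨↑(σ i), rfl⟩, hb₁S i⟩
    · intro hv
      obtain ⟨_, ⟨t, ht⟩, hvS⟩ := Finset.mem_filter.mp hv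
      have htT : t ∈ T := Finset.mem_filter.mpr ⟨Finset.mem_univ _, ht ▸ hvS⟩
      refine ⟨σ.symm ⟨t, htT⟩, ?_⟩
      rw [hb₁]
      simp only [OrderIso.apply_symm_apply]
      exact ht
  have hc₁ : F₁.card ≤ M := by
    rw [hrange₁, Set.ncard_coe_finset] at hKJ₁
    exact hKJ₁
  have hc₂ : Bf.card ≤ M := by
    rw [hrange₂, Set.ncard_coe_finset] at hKJ₂
    exact hKJ₂
  have hcover : (Finset.univ : Finset V) ⊆ F₁ ∪ Bf ∪ S := by
    intro v _
    by_cases hvS : v ∈ S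
    · exact Finset.mem_union.mpr (Or.inr hvS)
    · rcases hcov v with hvX | hvY
      · exact Finset.mem_union.mpr (Or.inl (Finset.mem_union.mpr (Or.inl
          (Finset.mem_filter.mpr ⟨Finset.mem_univ _, hvX, hvS⟩))))
      · exact Finset.mem_union.mpr (Or.inl (Finset.mem_union.mpr (Or.inr
          (Finset.mem_filter.mpr ⟨Finset.mem_univ _, hvY, hvS⟩))))
  have hfinal : Fintype.card V ≤ F₁.card + Bf.card + S.card := by
    calc Fintype.card V = (Finset.univ : Finset V).card := (Finset.card_univ).symm
      _ ≤ (F₁ ∪ Bf ∪ S).card := Finset.card_le_card hcover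
      _ ≤ (F₁ ∪ Bf).card + S.card := Finset.card_union_le _ _
      _ ≤ F₁.card + Bf.card + S.card :=
          Nat.add_le_add_right (Finset.card_union_le _ _) _
  calc Fintype.card V ≤ F₁.card + Bf.card + S.card := hfinal
    _ ≤ M + M + 2 * k := by
        exact Nat.add_le_add (Nat.add_le_add hc₁ hc₂) hScard
    _ = 2 * M + 2 * k := by ring
end
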